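/- arXiv:2001.04173 — 8 statements merged into one kernel-verified Lean document; each statement's English description precedes it below -/
import Mathlib

section
/- For all real x, y ≥ 1 and every ε ∈ (0,1), one has x·y ≤ x·log(e + x) + e^((1+ε)·y). -/
open Real

theorem stmt1 (x y ε : ℝ) (hx : 1 ≤ x) (hy : 1 ≤ y) (hε : 0 < ε) (hε' : ε < 1) :
    x * y ≤ x * Real.log (Real.exp 1 + x) + Real.exp ((1 + ε) * y) := by
  have hx0 : (0:ℝ) < x := lt_of_lt_of_le one_pos hx
  -- key: x * y ≤ x * log x - x + exp y
  have key : x * (y - Real.log x + 1) ≤ Real.exp y := by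
    have h1 : y - Real.log x + 1 ≤ Real.exp (y - Real.log x) :=
      Real.add_one_le_exp _
    have h2 : x * Real.exp (y - Real.log x) = Real.exp y := by
      rw [Real.exp_sub, Real.exp_log hx0]
      field_simp
    calc x * (y - Real.log x + 1) ≤ x * Real.exp (y - Real.log x) := by
          exact mul_le_mul_of_nonneg_left h1 hx0.le
      _ = Real.exp y := h2
  have hlog : Real.log x ≤ Real.log (Real.exp 1 + x) :=
    Real.log_le_log hx0 (by linarith [Real.exp_pos 1])
  have hexp : Real.exp y ≤ Real.exp ((1 + ε) * y) := by
    apply Real.exp_le_exp.mpr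
    nlinarith
  nlinarith [mul_le_mul_of_nonneg_left hlog hx0.le]
end

section
/- Let W and h be nonnegative measurable functions on the unit disk D in the plane with W(z) ≤ 1 for all z, and let ε₀ ∈ (0, 1/2), α > 0, C > 0 be constants. Assume that for every ε with 0 < ε < ε₀ one has ∫_D W(z)^ε · h(z) dm(z) ≤ C / ε^α. Then there exists a constant C₁, depending only on ε₀, α, and C, such that for every η with 0 < η ≤ 1, ∫_D h(z) / (log(e + 1/W(z)))^(α+η) dm(z) ≤ C₁ / η. -/
open Real MeasureTheory


private lemma one_le_logL {a : ℝ} (ha : 0 < a) :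
    1 ≤ Real.log (Real.exp 1 + 1 / a) := by
  have h1 : (0:ℝ) < 1 / a := by positivity
  calc (1:ℝ) = Real.log (Real.exp 1) := (Real.log_exp 1).symm
    _ ≤ _ := Real.log_le_log (Real.exp_pos 1) (by linarith)

private lemma exp_pow_bound (ε : ℝ) (hε : 0 < ε) (n : ℕ) (hn : 0 < n) {x : ℝ} (hx : 0 ≤ x) :
    x ^ n ≤ ((n:ℝ)/ε) ^ n * Real.exp (ε * x) := by
  have hn' : (0:ℝ) < n := Nat.cast_pos.mpr hn
  have h1 : ε * x / n ≤ Real.exp (ε * x / n) := by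
    have := Real.add_one_le_exp (ε * x / n); linarith
  have h2 : (ε * x / n) ^ n ≤ Real.exp (ε * x / n) ^ n :=
    pow_le_pow_left₀ (by positivity) h1 n
  have h3 : Real.exp (ε * x / n) ^ n = Real.exp (ε * x) := by
    rw [← Real.exp_nat_mul]
    congr 1
    field_simp
  have h4 : x ^ n = ((n:ℝ)/ε) ^ n * (ε * x / n) ^ n := by
    rw [← mul_pow]
    congr 1
    field_simp
  calc x ^ n = ((n:ℝ)/ε) ^ n * (ε * x / n) ^ n := h4
    _ ≤ ((n:ℝ)/ε) ^ n * Real.exp (ε * x / n) ^ n :=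
        mul_le_mul_of_nonneg_left h2 (by positivity)
    _ = ((n:ℝ)/ε) ^ n * Real.exp (ε * x) := by rw [h3]



private lemma ptwise (ε s : ℝ) (hε : 0 < ε) (hs : 0 < s) :
    ∃ K : ℝ, 0 ≤ K ∧ ∀ a : ℝ, 0 < a → a ≤ 1 →
      a ^ ε * Real.log (Real.exp 1 + 1 / a) ^ s ≤ K := by
  set n := ⌈s⌉₊ with hn
  have hn0 : 0 < n := Nat.ceil_pos.mpr hs
  refine ⟨(2:ℝ) ^ s + Real.exp ε * ((n:ℝ)/ε) ^ n, by positivity, ?_⟩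
  intro a ha ha1
  set L := Real.log (Real.exp 1 + 1 / a) with hLdef
  have hL1 : 1 ≤ L := one_le_logL ha
  have hL0 : 0 < L := lt_of_lt_of_le one_pos hL1
  by_cases hcase : L ≤ 2
  · have h1 : a ^ ε ≤ 1 := Real.rpow_le_one ha.le ha1 hε.le
    have h2 : L ^ s ≤ (2:ℝ) ^ s := Real.rpow_le_rpow hL0.le hcase hs.le
    have h3 : (0:ℝ) ≤ L ^ s := Real.rpow_nonneg hL0.le s
    have h4 : a ^ ε * L ^ s ≤ (2:ℝ) ^ s := by
      calc a ^ ε * L ^ s ≤ 1 * L ^ s := mul_le_mul_of_nonneg_right h1 h3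
        _ = L ^ s := one_mul _
        _ ≤ (2:ℝ) ^ s := h2
    have h5 : (0:ℝ) ≤ Real.exp ε * ((n:ℝ)/ε) ^ n := by positivity
    linarith
  · push_neg at hcase
    have hEa : Real.exp L = Real.exp 1 + 1 / a := Real.exp_log (by positivity)
    have key : Real.exp (L - 1) ≤ 1 / a := by
      have h6 : Real.exp 1 ≤ Real.exp (L - 1) := Real.exp_le_exp.mpr (by linarith)
      have h7 : (2:ℝ) ≤ Real.exp 1 := by
        have := Real.exp_one_gt_d9; linarith
      have h8 : Real.exp L = Real.exp (L - 1) * Real.exp 1 := by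
        rw [← Real.exp_add]; ring_nf
      nlinarith [Real.exp_pos (L - 1)]
    have hE : (0:ℝ) < Real.exp (L - 1) := Real.exp_pos _
    have haL : a ≤ Real.exp (1 - L) := by
      have h9 : a ≤ 1 / Real.exp (L - 1) := by
        rw [le_div_iff₀ hE]
        calc a * Real.exp (L - 1) ≤ a * (1 / a) := mul_le_mul_of_nonneg_left key ha.le
          _ = 1 := by field_simp
      rwa [show (1:ℝ) - L = -(L - 1) by ring, Real.exp_neg, ← one_div]
    -- a ^ ε ≤ exp (ε * (1 - L))
    have h10 : a ^ ε ≤ Real.exp (ε * (1 - L)) := by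
      calc a ^ ε ≤ Real.exp (1 - L) ^ ε := Real.rpow_le_rpow ha.le haL hε.le
        _ = Real.exp (ε * (1 - L)) := by
            rw [Real.rpow_def_of_pos (Real.exp_pos _), Real.log_exp, mul_comm]
    -- L ^ s ≤ (n/ε)^n * exp (ε * L)
    have h11 : L ^ s ≤ ((n:ℝ)/ε) ^ n * Real.exp (ε * L) := by
      calc L ^ s ≤ L ^ (n:ℝ) := Real.rpow_le_rpow_of_exponent_le hL1 (Nat.le_ceil s)
        _ = L ^ n := Real.rpow_natCast L n
        _ ≤ ((n:ℝ)/ε) ^ n * Real.exp (ε * L) := exp_pow_bound ε hε n hn0 hL0.le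
    have h12 : a ^ ε * L ^ s ≤ Real.exp (ε * (1 - L)) * (((n:ℝ)/ε) ^ n * Real.exp (ε * L)) :=
      mul_le_mul h10 h11 (Real.rpow_nonneg hL0.le s) (Real.exp_pos _).le
    have h13 : Real.exp (ε * (1 - L)) * (((n:ℝ)/ε) ^ n * Real.exp (ε * L))
        = Real.exp ε * ((n:ℝ)/ε) ^ n := by
      rw [show Real.exp (ε * (1 - L)) * (((n:ℝ)/ε) ^ n * Real.exp (ε * L))
          = (Real.exp (ε * (1 - L)) * Real.exp (ε * L)) * ((n:ℝ)/ε) ^ n by ring,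
        ← Real.exp_add]
      ring_nf
    have h14 : (0:ℝ) < (2:ℝ) ^ s := Real.rpow_pos_of_pos two_pos s
    linarith [h12, h13.le]


private lemma geom_bound {η : ℝ} (hη : 0 < η) (hη1 : η ≤ 1) :
    η / 4 ≤ 1 - (2:ℝ) ^ (-η) := by
  set t := (2:ℝ) ^ η with ht
  have ht0 : 0 < t := Real.rpow_pos_of_pos two_pos η
  have hlog : (0.6931471803 : ℝ) < Real.log 2 := Real.log_two_gt_d9
  have h1 : 1 + η * Real.log 2 ≤ t := by
    rw [ht, Real.rpow_def_of_pos two_pos]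
    have := Real.add_one_le_exp (Real.log 2 * η)
    linarith [this]
  have h2 : (2:ℝ) ^ (-η) = t⁻¹ := by
    rw [ht, ← Real.rpow_neg (by norm_num : (0:ℝ) ≤ 2)]
  rw [h2]
  have h3 : t * t⁻¹ = 1 := mul_inv_cancel₀ ht0.ne'
  have h4 : 0 < t⁻¹ := by positivity
  have h5 : t ≤ 2 := by
    rw [ht]
    calc (2:ℝ) ^ η ≤ (2:ℝ) ^ (1:ℝ) := Real.rpow_le_rpow_of_exponent_le one_le_two hη1
      _ = 2 := Real.rpow_one 2
  have h6 : (2:ℝ)⁻¹ ≤ t⁻¹ := inv_anti₀ ht0 h5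
  have h7 := mul_le_mul_of_nonneg_right h1 h4.le
  nlinarith [h7, h3, h6, hlog, hη, hη1, h4, mul_nonneg hη.le h4.le, mul_pos hη h4]



theorem stmt5 (W h : ℂ → ℝ) (hWm : Measurable W) (hhm : Measurable h)
    (hW0 : ∀ z, 0 ≤ W z) (hW1 : ∀ z, W z ≤ 1) (hh0 : ∀ z, 0 ≤ h z)
    (ε₀ α C : ℝ) (hε₀ : ε₀ ∈ Set.Ioo (0:ℝ) (1/2)) (hα : 0 < α) (hC : 0 < C)
    (hyp : ∀ ε : ℝ, 0 < ε → ε < ε₀ →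
      ∫ z in Metric.ball (0:ℂ) 1, W z ^ ε * h z ≤ C / ε ^ α) :
    ∃ C₁ : ℝ, ∀ η : ℝ, 0 < η → η ≤ 1 →
      ∫ z in Metric.ball (0:ℂ) 1,
        (if W z = 0 then 0 else h z / (Real.log (Real.exp 1 + 1 / W z)) ^ (α + η))
        ≤ C₁ / η := by
  obtain ⟨hε₀0, hε₀half⟩ := hε₀
  set c : ℝ := ε₀ / 2 with hcdef
  have hc0 : 0 < c := by positivity
  have hcε₀ : c < ε₀ := by rw [hcdef]; linarith
  have hC₁0 : 0 < 4 * Real.exp 1 * C * c ^ (-α) := by positivity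
  refine ⟨4 * Real.exp 1 * C * c ^ (-α), ?_⟩
  intro η hη hη1
  have hs0 : 0 < α + η := by linarith
  set s : ℝ := α + η with hsdef
  set μ := (volume : Measure ℂ).restrict (Metric.ball (0:ℂ) 1) with hμ
  -- the function L
  set Lf : ℂ → ℝ := fun z => Real.log (Real.exp 1 + 1 / W z) with hLf
  have hLm : Measurable Lf := by
    apply Real.measurable_log.comp
    exact measurable_const.add (measurable_const.div hWm)
  set f : ℂ → ℝ := fun z => if W z = 0 then 0 else h z / Lf z ^ s with hfdef
  have hrpowm : ∀ t : ℝ, 0 ≤ t → Measurable (fun x : ℝ => x ^ t) := fun t ht =>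
    (Real.continuous_rpow_const ht).measurable
  have hfm : Measurable f := by
    apply Measurable.ite (hWm (measurableSet_singleton 0)) measurable_const
    exact hhm.div ((hrpowm s hs0.le).comp hLm)
  have hf0 : ∀ z, 0 ≤ f z := by
    intro z
    rw [hfdef]
    dsimp only
    split
    · exact le_refl 0
    · rename_i hWz0
      have hWz : 0 < W z := lt_of_le_of_ne (hW0 z) (Ne.symm hWz0)
      exact div_nonneg (hh0 z) (Real.rpow_nonneg (by linarith [one_le_logL hWz]) s)
  -- basic facts about Lf
  have hL1 : ∀ z, W z ≠ 0 → 1 ≤ Lf z := by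
    intro z hz
    exact one_le_logL (lt_of_le_of_ne (hW0 z) (Ne.symm hz))
  -- the sequence of epsilons
  set εk : ℕ → ℝ := fun k => c * (2:ℝ)⁻¹ ^ k with hεk
  have hεk0 : ∀ k, 0 < εk k := fun k => by positivity
  have hεkε₀ : ∀ k, εk k < ε₀ := by
    intro k
    have h1 : (2:ℝ)⁻¹ ^ k ≤ 1 := pow_le_one₀ (by norm_num) (by norm_num)
    calc εk k ≤ c * 1 := mul_le_mul_of_nonneg_left h1 hc0.le
      _ = c := mul_one c
      _ < ε₀ := hcε₀
  have hWεm : ∀ k, Measurable (fun z => W z ^ εk k * h z) := fun k =>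
    (((hrpowm _ (hεk0 k).le).comp hWm).mul hhm)
  have hWε0 : ∀ k z, 0 ≤ W z ^ εk k * h z := fun k z =>
    mul_nonneg (Real.rpow_nonneg (hW0 z) _) (hh0 z)
  by_cases hint : ∀ k : ℕ, Integrable (fun z => W z ^ εk k * h z) μ
  · -- main case
    have hypk : ∀ k, ∫⁻ z, ENNReal.ofReal (W z ^ εk k * h z) ∂μ
        ≤ ENNReal.ofReal (C / εk k ^ α) := by
      intro k
      rw [← ofReal_integral_eq_lintegral_ofReal (hint k) (ae_of_all _ (hWε0 k))]
      exact ENNReal.ofReal_le_ofReal (hyp (εk k) (hεk0 k) (hεkε₀ k))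
    -- dyadic decomposition
    set A : ℕ → Set ℂ := fun k => {z | (2:ℝ)^k ≤ Lf z ∧ Lf z < (2:ℝ)^(k+1)} with hA
    have hAmeas : ∀ k, MeasurableSet (A k) := by
      intro k
      have : A k = Lf ⁻¹' (Set.Ico ((2:ℝ)^k) ((2:ℝ)^(k+1))) := rfl
      rw [this]
      exact hLm measurableSet_Ico
    -- pointwise cover
    have hcover : ∀ z, ENNReal.ofReal (f z)
        ≤ ∑' k, (A k).indicator (fun z => ENNReal.ofReal (f z)) z := by
      intro z
      by_cases hz : W z = 0
      · have : f z = 0 := by rw [hfdef]; simp [hz]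
        rw [this, ENNReal.ofReal_zero]
        exact zero_le
      · have hLz : 1 ≤ Lf z := hL1 z hz
        have hex : ∃ n : ℕ, Lf z < 2^n := pow_unbounded_of_one_lt (Lf z) one_lt_two
        have hN0 : Nat.find hex ≠ 0 := by
          intro h0
          have := Nat.find_spec hex
          rw [h0] at this
          simp only [pow_zero] at this
          linarith
        obtain ⟨m, hm⟩ : ∃ m, Nat.find hex = m + 1 := ⟨Nat.find hex - 1, (Nat.succ_pred_eq_of_pos (Nat.pos_of_ne_zero hN0)).symm⟩
        have hmem : z ∈ A m := by
          constructor
          · have := Nat.find_min hex (m := m) (by omega)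
            push_neg at this
            exact this
          · have := Nat.find_spec hex
            rwa [hm] at this
        calc ENNReal.ofReal (f z)
            = (A m).indicator (fun z => ENNReal.ofReal (f z)) z := (Set.indicator_of_mem hmem (fun z => ENNReal.ofReal (f z))).symm
          _ ≤ ∑' k, (A k).indicator (fun z => ENNReal.ofReal (f z)) z := ENNReal.le_tsum m
    -- per-piece pointwise bound
    have hptk : ∀ k : ℕ, ∀ z ∈ A k,
        ENNReal.ofReal (f z) ≤ ENNReal.ofReal (Real.exp 1 * ((2:ℝ)^k) ^ (-s))
          * ENNReal.ofReal (W z ^ εk k * h z) := by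
      intro k z hz
      rw [← ENNReal.ofReal_mul (by positivity)]
      apply ENNReal.ofReal_le_ofReal
      obtain ⟨hk1, hk2⟩ := hz
      by_cases hWz0 : W z = 0
      · have : f z = 0 := by rw [hfdef]; simp [hWz0]
        rw [this]
        exact mul_nonneg (by positivity) (mul_nonneg (Real.rpow_nonneg (hW0 z) _) (hh0 z))
      · have hWz : 0 < W z := lt_of_le_of_ne (hW0 z) (Ne.symm hWz0)
        have hLz : 1 ≤ Lf z := hL1 z hWz0
        have h2k : (0:ℝ) < (2:ℝ)^k := by positivity
        have hfz : f z = h z / Lf z ^ s := by rw [hfdef]; simp only [hWz0, if_neg]; rfl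
        -- W z is not too small on A k
        have hWlow : Real.exp (-(2:ℝ)^(k+1)) < W z := by
          have hEL : Real.exp (Lf z) = Real.exp 1 + 1 / W z := Real.exp_log (by positivity)
          have h1W : 1 / W z < Real.exp ((2:ℝ)^(k+1)) := by
            have := Real.exp_lt_exp.mpr hk2
            rw [hEL] at this
            have := Real.exp_pos (1:ℝ)
            linarith [Real.exp_pos (1:ℝ)]
          have hEpos : (0:ℝ) < Real.exp ((2:ℝ)^(k+1)) := Real.exp_pos _
          rw [Real.exp_neg]
          have h2 : 1 < Real.exp ((2:ℝ)^(k+1)) * W z := by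
            have h3 := mul_lt_mul_of_pos_right h1W hWz
            rw [one_div, inv_mul_cancel₀ hWz.ne'] at h3
            exact h3
          have h4 : (Real.exp ((2:ℝ)^(k+1)))⁻¹ * Real.exp ((2:ℝ)^(k+1)) = 1 :=
            inv_mul_cancel₀ hEpos.ne'
          nlinarith
        -- hence W z ^ εk k is bounded below
        have hprod : (2:ℝ)^(k+1) * (c * ((2:ℝ)⁻¹)^k) = 2 * c := by
          have h2kne : ((2:ℝ)^k) ≠ 0 := by positivity
          rw [inv_pow, pow_succ]
          field_simp
        have hWεlow : Real.exp (-1) ≤ W z ^ εk k := by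
          have h5 : Real.exp (-(2:ℝ)^(k+1)) ^ εk k ≤ W z ^ εk k :=
            Real.rpow_le_rpow (Real.exp_pos _).le hWlow.le (hεk0 k).le
          have h6 : Real.exp (-(2:ℝ)^(k+1)) ^ εk k = Real.exp (-(2 * c)) := by
            rw [Real.rpow_def_of_pos (Real.exp_pos _), Real.log_exp, hεk]
            dsimp only
            rw [show -(2:ℝ)^(k+1) * (c * ((2:ℝ)⁻¹)^k) = -((2:ℝ)^(k+1) * (c * ((2:ℝ)⁻¹)^k)) by ring,
              hprod]
          have h7 : Real.exp (-1) ≤ Real.exp (-(2 * c)) := by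
            apply Real.exp_le_exp.mpr
            rw [hcdef]
            linarith
          rw [h6] at h5
          exact le_trans h7 h5
        have hone : 1 ≤ Real.exp 1 * W z ^ εk k := by
          have h8 := mul_le_mul_of_nonneg_left hWεlow (Real.exp_pos 1).le
          rw [← Real.exp_add] at h8
          norm_num at h8
          exact h8
        -- the chain
        have hpows : ((2:ℝ)^k) ^ s ≤ Lf z ^ s := Real.rpow_le_rpow h2k.le hk1 hs0.le
        have h2ks : (0:ℝ) < ((2:ℝ)^k) ^ s := Real.rpow_pos_of_pos h2k s
        have hLs : (0:ℝ) < Lf z ^ s := Real.rpow_pos_of_pos (by linarith) s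
        rw [hfz]
        calc h z / Lf z ^ s ≤ h z / ((2:ℝ)^k) ^ s := by
              apply div_le_div_of_nonneg_left (hh0 z) h2ks hpows
            _ ≤ (Real.exp 1 * W z ^ εk k) * (h z / ((2:ℝ)^k) ^ s) :=
              le_mul_of_one_le_left (div_nonneg (hh0 z) h2ks.le) hone
            _ = Real.exp 1 * ((2:ℝ)^k) ^ (-s) * (W z ^ εk k * h z) := by
              rw [Real.rpow_neg h2k.le]
              ring
    -- the real-number identity
    have hreal : ∀ k : ℕ, Real.exp 1 * ((2:ℝ)^k) ^ (-s) * (C / εk k ^ α)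
        = (Real.exp 1 * C * c ^ (-α)) * ((2:ℝ) ^ (-η)) ^ k := by
      intro k
      have h2k : (0:ℝ) < (2:ℝ)^k := by positivity
      have e1 : εk k ^ α = c ^ α * ((2:ℝ)^k) ^ (-α) := by
        rw [hεk]
        dsimp only
        rw [Real.mul_rpow hc0.le (by positivity), inv_pow, Real.inv_rpow h2k.le,
          ← Real.rpow_neg h2k.le]
      have e2 : C / εk k ^ α = C * c ^ (-α) * ((2:ℝ)^k) ^ α := by
        rw [e1, Real.rpow_neg hc0.le, Real.rpow_neg h2k.le]
        have hcα : (0:ℝ) < c ^ α := Real.rpow_pos_of_pos hc0 α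
        have h2α : (0:ℝ) < ((2:ℝ)^k) ^ α := Real.rpow_pos_of_pos h2k α
        field_simp
      have e3 : ((2:ℝ)^k) ^ (-s) * ((2:ℝ)^k) ^ α = ((2:ℝ)^k) ^ (-η) := by
        rw [← Real.rpow_add h2k]
        congr 1
        rw [hsdef]; ring
      have e4 : ((2:ℝ)^k) ^ (-η) = ((2:ℝ) ^ (-η)) ^ k := by
        rw [← Real.rpow_natCast ((2:ℝ) ^ (-η)) k, ← Real.rpow_natCast (2:ℝ) k,
          ← Real.rpow_mul (by norm_num : (0:ℝ) ≤ 2),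
          ← Real.rpow_mul (by norm_num : (0:ℝ) ≤ 2)]
        congr 1
        ring
      rw [e2, ← e4]
      rw [show Real.exp 1 * ((2:ℝ)^k) ^ (-s) * (C * c ^ (-α) * ((2:ℝ)^k) ^ α)
          = Real.exp 1 * C * c ^ (-α) * (((2:ℝ)^k) ^ (-s) * ((2:ℝ)^k) ^ α) by ring, e3]
    -- per-piece integral bound
    have hintk : ∀ k : ℕ, (∫⁻ z in A k, ENNReal.ofReal (f z) ∂μ)
        ≤ ENNReal.ofReal (Real.exp 1 * C * c ^ (-α)) * ENNReal.ofReal ((2:ℝ) ^ (-η)) ^ k := by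
      intro k
      have hconst : (0:ℝ) ≤ Real.exp 1 * ((2:ℝ)^k) ^ (-s) := by positivity
      calc (∫⁻ z in A k, ENNReal.ofReal (f z) ∂μ)
          ≤ ∫⁻ z in A k, ENNReal.ofReal (Real.exp 1 * ((2:ℝ)^k) ^ (-s))
              * ENNReal.ofReal (W z ^ εk k * h z) ∂μ :=
            setLIntegral_mono (measurable_const.mul (hWεm k).ennreal_ofReal) (hptk k)
        _ = ENNReal.ofReal (Real.exp 1 * ((2:ℝ)^k) ^ (-s))
              * ∫⁻ z in A k, ENNReal.ofReal (W z ^ εk k * h z) ∂μ :=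
            lintegral_const_mul _ (hWεm k).ennreal_ofReal
        _ ≤ ENNReal.ofReal (Real.exp 1 * ((2:ℝ)^k) ^ (-s))
              * ∫⁻ z, ENNReal.ofReal (W z ^ εk k * h z) ∂μ :=
            mul_le_mul_right (lintegral_mono' Measure.restrict_le_self le_rfl) _
        _ ≤ ENNReal.ofReal (Real.exp 1 * ((2:ℝ)^k) ^ (-s)) * ENNReal.ofReal (C / εk k ^ α) :=
            mul_le_mul_right (hypk k) _
        _ = ENNReal.ofReal (Real.exp 1 * ((2:ℝ)^k) ^ (-s) * (C / εk k ^ α)) :=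
            (ENNReal.ofReal_mul hconst).symm
        _ = ENNReal.ofReal ((Real.exp 1 * C * c ^ (-α)) * ((2:ℝ) ^ (-η)) ^ k) := by rw [hreal k]
        _ = ENNReal.ofReal (Real.exp 1 * C * c ^ (-α)) * ENNReal.ofReal (((2:ℝ) ^ (-η)) ^ k) :=
            ENNReal.ofReal_mul (by positivity)
        _ = ENNReal.ofReal (Real.exp 1 * C * c ^ (-α)) * ENNReal.ofReal ((2:ℝ) ^ (-η)) ^ k := by
            rw [ENNReal.ofReal_pow (by positivity)]
    -- put everything together
    rw [integral_eq_lintegral_of_nonneg_ae (ae_of_all _ hf0) hfm.aestronglyMeasurable]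
    apply ENNReal.toReal_le_of_le_ofReal (by positivity)
    have hgeo : (1 - ENNReal.ofReal ((2:ℝ) ^ (-η)))⁻¹ ≤ ENNReal.ofReal (4 / η) := by
      have h1 : ENNReal.ofReal (η / 4) ≤ 1 - ENNReal.ofReal ((2:ℝ) ^ (-η)) := by
        rw [← ENNReal.ofReal_one, ← ENNReal.ofReal_sub _ (by positivity : (0:ℝ) ≤ (2:ℝ) ^ (-η))]
        exact ENNReal.ofReal_le_ofReal (geom_bound hη hη1)
      calc (1 - ENNReal.ofReal ((2:ℝ) ^ (-η)))⁻¹ ≤ (ENNReal.ofReal (η / 4))⁻¹ :=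
            ENNReal.inv_le_inv.mpr h1
        _ = ENNReal.ofReal ((η / 4)⁻¹) := (ENNReal.ofReal_inv_of_pos (by positivity)).symm
        _ = ENNReal.ofReal (4 / η) := by rw [inv_div]
    calc (∫⁻ z, ENNReal.ofReal (f z) ∂μ)
        ≤ ∫⁻ z, ∑' k, (A k).indicator (fun z => ENNReal.ofReal (f z)) z ∂μ :=
          lintegral_mono hcover
      _ = ∑' k, ∫⁻ z, (A k).indicator (fun z => ENNReal.ofReal (f z)) z ∂μ :=
          lintegral_tsum (fun k => ((hfm.ennreal_ofReal).indicator (hAmeas k)).aemeasurable)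
      _ = ∑' k, ∫⁻ z in A k, ENNReal.ofReal (f z) ∂μ :=
          tsum_congr (fun k => lintegral_indicator (hAmeas k) _)
      _ ≤ ∑' k, ENNReal.ofReal (Real.exp 1 * C * c ^ (-α)) * ENNReal.ofReal ((2:ℝ) ^ (-η)) ^ k :=
          ENNReal.tsum_le_tsum hintk
      _ = ENNReal.ofReal (Real.exp 1 * C * c ^ (-α)) * ∑' k, ENNReal.ofReal ((2:ℝ) ^ (-η)) ^ k :=
          ENNReal.tsum_mul_left
      _ = ENNReal.ofReal (Real.exp 1 * C * c ^ (-α)) * (1 - ENNReal.ofReal ((2:ℝ) ^ (-η)))⁻¹ := by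
          rw [ENNReal.tsum_geometric]
      _ ≤ ENNReal.ofReal (Real.exp 1 * C * c ^ (-α)) * ENNReal.ofReal (4 / η) :=
          mul_le_mul_right hgeo _
      _ = ENNReal.ofReal ((Real.exp 1 * C * c ^ (-α)) * (4 / η)) :=
          (ENNReal.ofReal_mul (by positivity)).symm
      _ = ENNReal.ofReal (4 * Real.exp 1 * C * c ^ (-α) / η) := by ring_nf
  · -- non-integrable case : the integral of f is 0
    push_neg at hint
    obtain ⟨k, hk⟩ := hint
    have hnotf : ¬ Integrable f μ := by
      intro hfint
      apply hk
      obtain ⟨K, hK0, hKb⟩ := ptwise (εk k) s (hεk0 k) hs0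
      refine (hfint.const_mul K).mono (hWεm k).aestronglyMeasurable (ae_of_all _ ?_)
      intro z
      rw [Real.norm_eq_abs, Real.norm_eq_abs, abs_of_nonneg (hWε0 k z),
        abs_of_nonneg (mul_nonneg hK0 (hf0 z))]
      by_cases hz : W z = 0
      · rw [hfdef]
        simp only [hz, if_pos]
        rw [Real.zero_rpow (hεk0 k).ne', zero_mul, mul_zero]
      · have hWz : 0 < W z := lt_of_le_of_ne (hW0 z) (Ne.symm hz)
        have hLz : 1 ≤ Lf z := hL1 z hz
        have hLs : 0 < Lf z ^ s := Real.rpow_pos_of_pos (by linarith) s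
        have hb := hKb (W z) hWz (hW1 z)
        have hfz : f z = h z / Lf z ^ s := by rw [hfdef]; simp only [hz, if_neg]; rfl
        rw [hfz]
        have heq : W z ^ εk k * h z = (W z ^ εk k * Lf z ^ s) * (h z / Lf z ^ s) := by
          field_simp
        rw [heq]
        exact mul_le_mul_of_nonneg_right hb (div_nonneg (hh0 z) hLs.le)
    rw [integral_undef hnotf]
    positivity
end

section
/- Let ε ∈ (0, 1/2) and let K, K' be real numbers with K ≥ 1 and K' ≥ 1 related by: K' = (1 + t^(1+ε))/(1 − t^(1+ε)) and K = (1 + t)/(1 − t) for some t ∈ [0, 1). Then K' ≤ K/(1 + ε/2) + 4. -/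
open Real

theorem stmt9 (ε t K K' : ℝ) (hε : ε ∈ Set.Ioo (0:ℝ) (1/2))
    (ht : t ∈ Set.Ico (0:ℝ) 1) (hK : 1 ≤ K) (hK' : 1 ≤ K')
    (hKdef : K = (1 + t) / (1 - t))
    (hK'def : K' = (1 + t ^ (1 + ε)) / (1 - t ^ (1 + ε))) :
    K' ≤ K / (1 + ε/2) + 4 := by
  obtain ⟨hε0, hε2⟩ := hε
  obtain ⟨ht0, ht1⟩ := ht
  set u : ℝ := t ^ (1 + ε) with hu
  have hu0 : 0 ≤ u := Real.rpow_nonneg ht0 _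
  have hu1 : u < 1 := Real.rpow_lt_one ht0 ht1 (by linarith)
  have h1t : 0 < 1 - t := by linarith
  have h1u : 0 < 1 - u := by linarith
  have hεsq : (0:ℝ) < (1 + ε)^2 := by positivity
  have hut : u ≤ t := by
    rcases eq_or_lt_of_le ht0 with h | h
    · rw [hu, ← h, Real.zero_rpow (by positivity)]
    · calc u ≤ t ^ (1:ℝ) := Real.rpow_le_rpow_of_exponent_ge h ht1.le (by linarith)
        _ = t := Real.rpow_one t
  by_cases hcase : ε / (1 + ε)^2 ≤ 1 - t
  · -- far case: K' ≤ K and K is bounded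
    have hK'K : K' ≤ K := by
      rw [hK'def, hKdef, div_le_div_iff₀ h1u h1t]
      nlinarith
    have hε' : ε ≤ (1 - t) * (1 + ε)^2 := by
      rw [← div_le_iff₀ hεsq]; exact hcase
    have hKbound : K ≤ 2 * (1 + ε)^2 / ε := by
      rw [hKdef, div_le_div_iff₀ h1t hε0]
      nlinarith
    have h2 : (0:ℝ) < 1 + ε/2 := by linarith
    have hKb : K * ε ≤ 2 * (1 + ε)^2 := by
      rw [hKdef, div_mul_eq_mul_div, div_le_iff₀ h1t]
      nlinarith
    have h4 : K ≤ K / (1 + ε/2) + 4 := by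
      rw [div_add' _ _ _ h2.ne', le_div_iff₀ h2]
      nlinarith
    linarith
  · -- near case
    push_neg at hcase
    have ht0' : 0 < t := by
      have : ε / (1 + ε)^2 < 1 := by
        rw [div_lt_one hεsq]; nlinarith
      linarith
    set y : ℝ := (1 + ε) * (1 - t) with hy
    have hy0 : 0 ≤ y := by positivity
    have hulog : u = Real.exp ((1 + ε) * Real.log t) := by
      rw [hu, Real.rpow_def_of_pos ht0', mul_comm]
    have hlog : Real.log t ≤ t - 1 := Real.log_le_sub_one_of_pos ht0'
    have hexp1 : u ≤ Real.exp (-y) := by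
      rw [hulog]
      apply Real.exp_le_exp.mpr
      rw [hy]; nlinarith
    have hexp2 : Real.exp (-y) ≤ 1 - y + y^2/2 := by
      have h1 : 1 + y + y^2/2 ≤ Real.exp y := Real.quadratic_le_exp_of_nonneg hy0
      have h2 : Real.exp (-y) * Real.exp y = 1 := by
        rw [← Real.exp_add]; simp
      have h3 : 0 < Real.exp (-y) := Real.exp_pos _
      nlinarith [sq_nonneg y, sq_nonneg (y^2), sq_nonneg (y - 1)]
    have hub : u ≤ 1 - y + y^2/2 := hexp1.trans hexp2
    -- key inequality: 1 - u ≥ (1 + ε/2)(1 - t)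
    have hd : (1 - t) * (1 + ε)^2 ≤ ε := ((lt_div_iff₀ hεsq).mp hcase).le
    have hub' : u ≤ 1 - (1 + ε) * (1 - t) + ((1 + ε) * (1 - t))^2 / 2 := by
      rw [← hy]; exact hub
    have hkey : (1 + ε/2) * (1 - t) ≤ 1 - u := by
      nlinarith [mul_le_mul_of_nonneg_left hd h1t.le]
    have hmain : K' ≤ K / (1 + ε/2) := by
      rw [hK'def, hKdef, div_div]
      apply div_le_div₀ (by linarith : (0:ℝ) ≤ 1 + t) (by linarith) (by positivity)
      exact le_trans (le_of_eq (mul_comm _ _)) hkey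
    exact hmain.trans (le_add_of_nonneg_right (by norm_num))
end

section
/- For every 0 < β' < β < 1, every α ≥ 1, and every p > 0, there exists a constant C = C(p, β, β', α) such that for all real x, y ≥ 1: x·y·exp((log(e + x·y))^(β')) ≤ C·( exp(p·x^α) + y·exp((log(e + y))^β) ). -/
open Real

lemma aux_pow_le_fact_exp (n : ℕ) {t : ℝ} (ht : 0 ≤ t) :
    t ^ n ≤ n.factorial * Real.exp t := by
  have h := Real.sum_le_exp_of_nonneg ht (n + 1)
  have h2 : t ^ n / n.factorial ≤ ∑ i ∈ Finset.range (n + 1), t ^ i / i.factorial :=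
    Finset.single_le_sum (f := fun i => t ^ i / (i.factorial : ℝ))
      (fun i _ => by positivity) (Finset.self_mem_range_succ n)
  have hfac : (0 : ℝ) < n.factorial := by positivity
  have h3 := h2.trans h
  rw [div_le_iff₀ hfac] at h3
  linarith

set_option maxHeartbeats 2000000 in
theorem stmt10 (β' β α p : ℝ) (hβ'0 : 0 < β') (hβ'β : β' < β) (hβ : β < 1)
    (hα : 1 ≤ α) (hp : 0 < p) :
    ∃ C : ℝ, 0 < C ∧ ∀ x y : ℝ, 1 ≤ x → 1 ≤ y →
      x * y * Real.exp ((Real.log (Real.exp 1 + x * y)) ^ β') ≤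
        C * (Real.exp (p * x ^ α) + y * Real.exp ((Real.log (Real.exp 1 + y)) ^ β)) := by
  have hβ0 : 0 < β := hβ'0.trans hβ'β
  set δ := β - β' with hδdef
  have hδ : 0 < δ := by simp only [hδdef]; linarith
  set n : ℕ := ⌈1 / β⌉₊ with hn
  set K : ℝ := 7 + 2 * 8 ^ n * n.factorial with hK
  have hK0 : (0 : ℝ) < K := by positivity
  set A : ℝ := K ^ 2 / (4 * p) with hA
  set T : ℝ := (4 : ℝ) ^ (1 / δ) with hT
  have hT0 : 0 < T := by positivity
  refine ⟨Real.exp (2 * T) + Real.exp A, by positivity, ?_⟩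
  intro x y hx hy
  have hx0 : (0 : ℝ) < x := by linarith
  have hy0 : (0 : ℝ) < y := by linarith
  set t := Real.log x with htdef
  set L := Real.log (Real.exp 1 + y) with hLdef
  have ht0 : 0 ≤ t := Real.log_nonneg hx
  have hL1 : 1 ≤ L := by
    rw [hLdef, Real.le_log_iff_exp_le (by positivity)]
    linarith [Real.exp_pos 1]
  have hL0 : (0 : ℝ) < L := by linarith
  set M := Real.log (Real.exp 1 + x * y) with hMdef
  have hM1 : 1 ≤ M := by
    rw [hMdef, Real.le_log_iff_exp_le (by positivity)]
    nlinarith [Real.exp_pos 1]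
  have hMLt : M ≤ L + t := by
    have h1 : Real.exp 1 + x * y ≤ x * (Real.exp 1 + y) := by
      nlinarith [Real.exp_pos 1]
    calc M ≤ Real.log (x * (Real.exp 1 + y)) :=
          Real.log_le_log (by positivity) h1
      _ = t + L := Real.log_mul (by positivity) (by positivity)
      _ = L + t := by ring
  have hxe : x = Real.exp t := (Real.exp_log hx0).symm
  by_cases hcase : t ≤ L ^ β / 2
  · -- Case 1: x small
    have hLβL : L ^ β ≤ L := by
      calc L ^ β ≤ L ^ (1 : ℝ) :=
        Real.rpow_le_rpow_of_exponent_le hL1 hβ.le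
      _ = L := Real.rpow_one L
    have hM2L : M ≤ 2 * L := by linarith
    have hMβ' : M ^ β' ≤ 2 * L ^ β' := by
      calc M ^ β' ≤ (2 * L) ^ β' :=
            Real.rpow_le_rpow (by linarith) hM2L hβ'0.le
        _ = 2 ^ β' * L ^ β' := Real.mul_rpow (by norm_num) hL0.le
        _ ≤ 2 * L ^ β' := by
            have h2 : (2:ℝ) ^ β' ≤ 2 ^ (1:ℝ) :=
              Real.rpow_le_rpow_of_exponent_le (by norm_num) (by linarith)
            rw [Real.rpow_one] at h2
            have : (0:ℝ) ≤ L ^ β' := by positivity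
            nlinarith
    have hkey : 2 * L ^ β' ≤ L ^ β / 2 + 2 * T := by
      by_cases hLT : L ≤ T
      · have hLβ' : L ^ β' ≤ L := by
          calc L ^ β' ≤ L ^ (1:ℝ) :=
            Real.rpow_le_rpow_of_exponent_le hL1 (by linarith)
          _ = L := Real.rpow_one L
        have : (0:ℝ) ≤ L ^ β := by positivity
        linarith
      · push_neg at hLT
        have hT4 : T ^ δ = 4 := by
          rw [hT, ← Real.rpow_mul (by norm_num), one_div,
            inv_mul_cancel₀ hδ.ne', Real.rpow_one]
        have hLδ : (4:ℝ) ≤ L ^ δ := by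
          rw [← hT4]
          exact Real.rpow_le_rpow hT0.le hLT.le hδ.le
        have hmul : L ^ δ * L ^ β' = L ^ β := by
          rw [← Real.rpow_add hL0]; congr 1; rw [hδdef]; ring
        have hβ'pos : (0:ℝ) ≤ L ^ β' := by positivity
        nlinarith
    have hMfin : M ^ β' ≤ L ^ β / 2 + 2 * T := by linarith
    have hxle : x ≤ Real.exp (L ^ β / 2) := by
      rw [hxe]; exact Real.exp_le_exp.mpr hcase
    calc x * y * Real.exp (M ^ β')
        ≤ Real.exp (L ^ β / 2) * y * Real.exp (L ^ β / 2 + 2 * T) := by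
          apply mul_le_mul (mul_le_mul hxle le_rfl hy0.le (Real.exp_nonneg _))
            (Real.exp_le_exp.mpr hMfin) (Real.exp_nonneg _)
            (mul_nonneg (Real.exp_nonneg _) hy0.le)
      _ = y * (Real.exp (L ^ β / 2) * Real.exp (L ^ β / 2 + 2 * T)) := by ring
      _ = y * Real.exp (L ^ β / 2 + (L ^ β / 2 + 2 * T)) := by rw [← Real.exp_add]
      _ = y * Real.exp (2 * T + L ^ β) := by
          rw [show L ^ β / 2 + (L ^ β / 2 + 2 * T) = 2 * T + L ^ β by ring]
      _ = Real.exp (2 * T) * (y * Real.exp (L ^ β)) := by rw [Real.exp_add]; ring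
      _ ≤ (Real.exp (2 * T) + Real.exp A) * (Real.exp (p * x ^ α) + y * Real.exp (L ^ β)) := by
          have h1 : (0:ℝ) ≤ y * Real.exp (L ^ β) := mul_nonneg hy0.le (Real.exp_nonneg _)
          exact mul_le_mul (le_add_of_nonneg_right (Real.exp_nonneg A))
            (le_add_of_nonneg_left (Real.exp_nonneg _)) h1
            (add_nonneg (Real.exp_nonneg _) (Real.exp_nonneg _))
  · -- Case 2: x large
    rw [not_le] at hcase
    have hLle : L ≤ (2 * t) ^ (1 / β) := by
      have h1 : L = (L ^ β) ^ (1 / β) := by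
        rw [← Real.rpow_mul hL0.le, mul_one_div, div_self hβ0.ne', Real.rpow_one]
      rw [h1]
      exact Real.rpow_le_rpow (by positivity) (by linarith) (by positivity)
    set s := (2 * t) ^ (1 / β) with hs
    have hs0 : 0 ≤ s := by positivity
    have hyL : y ≤ Real.exp L := by
      rw [hLdef, Real.exp_log (by positivity)]
      linarith [Real.exp_pos 1]
    have hMβ' : M ^ β' ≤ L + t + 1 := by
      calc M ^ β' ≤ M ^ (1:ℝ) :=
            Real.rpow_le_rpow_of_exponent_le hM1 (by linarith)
        _ = M := Real.rpow_one M
        _ ≤ L + t + 1 := by linarith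
    -- bound s by polynomial
    have hsn : s ≤ (2 * t) ^ n + 1 := by
      by_cases h2t : 2 * t ≤ 1
      · have : s ≤ 1 := Real.rpow_le_one (by linarith) h2t (by positivity)
        have : (0:ℝ) ≤ (2 * t) ^ n := by positivity
        linarith
      · push_neg at h2t
        have h1 : s ≤ (2 * t) ^ (n : ℝ) :=
          Real.rpow_le_rpow_of_exponent_le h2t.le (Nat.le_ceil _)
        rw [Real.rpow_natCast] at h1
        linarith
    -- polynomial ≤ exp bound
    have hpoly : (2 * t) ^ n ≤ 8 ^ n * n.factorial * Real.exp (t / 2) := by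
      have h1 : (t / 4) ^ n ≤ n.factorial * Real.exp (t / 4) :=
        aux_pow_le_fact_exp n (by linarith)
      have h2 : Real.exp (t / 4) ≤ Real.exp (t / 2) :=
        Real.exp_le_exp.mpr (by linarith)
      have h3 : (2 * t) ^ n = 8 ^ n * (t / 4) ^ n := by
        rw [← mul_pow]; ring_nf
      rw [h3]
      have h8 : (0:ℝ) ≤ 8 ^ n := by positivity
      calc 8 ^ n * (t / 4) ^ n ≤ 8 ^ n * (n.factorial * Real.exp (t / 4)) := by
            exact mul_le_mul_of_nonneg_left h1 h8
        _ ≤ 8 ^ n * (n.factorial * Real.exp (t / 2)) := by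
            apply mul_le_mul_of_nonneg_left _ h8
            exact mul_le_mul_of_nonneg_left h2 (by positivity)
        _ = 8 ^ n * n.factorial * Real.exp (t / 2) := by ring
    have htexp : t ≤ 2 * Real.exp (t / 2) := by
      have := Real.add_one_le_exp (t / 2)
      nlinarith [Real.exp_pos (t / 2)]
    have h1exp : (1:ℝ) ≤ Real.exp (t / 2) := by
      rw [← Real.exp_zero]; exact Real.exp_le_exp.mpr (by linarith)
    have hg : 2 * t + 2 * s + 1 ≤ K * Real.exp (t / 2) := by
      have : 2 * s ≤ 2 * ((2 * t) ^ n + 1) := by linarith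
      rw [hK]
      nlinarith [hpoly]
    -- AM-GM
    have hu : Real.exp (t / 2) * Real.exp (t / 2) = Real.exp t := by
      rw [← Real.exp_add, show t / 2 + t / 2 = t by ring]
    have hamgm : K * Real.exp (t / 2) ≤ p * Real.exp t + A := by
      have h4pA : 4 * p * A = K ^ 2 := by
        rw [hA]; field_simp
      have h5 : K * Real.exp (t / 2) ≤
          p * (Real.exp (t / 2) * Real.exp (t / 2)) + A := by
        nlinarith [sq_nonneg (2 * p * Real.exp (t / 2) - K), hp, hK0]
      rw [hu] at h5
      exact h5
    have hpx : p * Real.exp t ≤ p * x ^ α := by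
      apply mul_le_mul_of_nonneg_left _ hp.le
      calc Real.exp t = x ^ (1:ℝ) := by rw [Real.rpow_one, hxe]
        _ ≤ x ^ α := Real.rpow_le_rpow_of_exponent_le hx hα
    calc x * y * Real.exp (M ^ β')
        ≤ Real.exp t * Real.exp L * Real.exp (L + t + 1) := by
          apply mul_le_mul (mul_le_mul (le_of_eq hxe) hyL hy0.le (Real.exp_nonneg _))
            (Real.exp_le_exp.mpr hMβ') (Real.exp_nonneg _)
            (mul_nonneg (Real.exp_nonneg _) (Real.exp_nonneg _))
      _ = Real.exp (2 * t + 2 * L + 1) := by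
          rw [← Real.exp_add, ← Real.exp_add,
            show t + L + (L + t + 1) = 2 * t + 2 * L + 1 by ring]
      _ ≤ Real.exp (2 * t + 2 * s + 1) := by
          apply Real.exp_le_exp.mpr; linarith
      _ ≤ Real.exp (p * Real.exp t + A) := Real.exp_le_exp.mpr (by linarith)
      _ = Real.exp A * Real.exp (p * Real.exp t) := by
          rw [← Real.exp_add, show p * Real.exp t + A = A + p * Real.exp t by ring]
      _ ≤ Real.exp A * Real.exp (p * x ^ α) := by
          exact mul_le_mul_of_nonneg_left (Real.exp_le_exp.mpr hpx) (by positivity)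
      _ ≤ (Real.exp (2 * T) + Real.exp A) * (Real.exp (p * x ^ α) + y * Real.exp (L ^ β)) := by
          exact mul_le_mul (le_add_of_nonneg_left (Real.exp_nonneg _))
            (le_add_of_nonneg_right (mul_nonneg hy0.le (Real.exp_nonneg _)))
            (Real.exp_nonneg _)
            (add_nonneg (Real.exp_nonneg _) (Real.exp_nonneg _))
end

section
/- Let β > 0 and δ ∈ (0, 1/5). Then the function x ↦ (1 + δ·log(1 + 1/x))^(−β) is concave on (0, ∞), provided δ < 1/(1+β). -/
open Real

theorem stmt11 (β δ : ℝ) (hβ : 0 < β) (hδ0 : 0 < δ) (hδ5 : δ < 1/5)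
    (hδβ : δ < 1 / (1 + β)) :
    ConcaveOn ℝ (Set.Ioi (0:ℝ))
      (fun x => (1 + δ * Real.log (1 + 1/x)) ^ (-β)) := by
  set u : ℝ → ℝ := fun x => 1 + δ * Real.log (1 + 1/x) with hu_def
  set g : ℝ → ℝ := fun x => β * δ * (u x ^ (-β - 1)) * (x^2 + x)⁻¹ with hg_def
  set g' : ℝ → ℝ := fun x =>
    β * δ * (δ * (β + 1) * u x ^ (-β - 2) - (2*x + 1) * u x ^ (-β - 1)) * ((x^2 + x)^2)⁻¹
    with hg'_def
  have hbasic : ∀ x : ℝ, x ∈ Set.Ioi (0:ℝ) →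
      0 < x ∧ 0 < 1 + 1/x ∧ 1 ≤ u x := by
    intro x hx
    have hx0 : (0:ℝ) < x := hx
    have h1 : (0:ℝ) < 1 + 1/x := by positivity
    have hlog : 0 ≤ Real.log (1 + 1/x) := Real.log_nonneg (by
      have : 0 < 1/x := by positivity
      linarith)
    exact ⟨hx0, h1, by simp only [hu_def]; nlinarith⟩
  have hd3 : ∀ x : ℝ, x ∈ Set.Ioi (0:ℝ) →
      HasDerivAt u (δ * (-(x^2)⁻¹ / (1 + 1/x))) x := by
    intro x hx
    obtain ⟨hx0, h1, hu1⟩ := hbasic x hx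
    have d1 : HasDerivAt (fun x : ℝ => 1 + 1/x) (-(x^2)⁻¹) x := by
      simpa [one_div] using ((hasDerivAt_inv hx0.ne').const_add 1)
    have d2 : HasDerivAt (fun x : ℝ => Real.log (1 + 1/x)) (-(x^2)⁻¹ / (1 + 1/x)) x :=
      d1.log h1.ne'
    exact (d2.const_mul δ).const_add 1
  have key : ∀ x : ℝ, x ∈ Set.Ioi (0:ℝ) →
      HasDerivAt (fun x => u x ^ (-β)) (g x) x := by
    intro x hx
    obtain ⟨hx0, h1, hu1⟩ := hbasic x hx
    have hu0 : (0:ℝ) < u x := by linarith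
    have d4 := (hd3 x hx).rpow_const (p := -β) (Or.inl hu0.ne')
    convert d4 using 1
    simp only [hg_def]
    have hx2 : (x:ℝ)^2 ≠ 0 := by positivity
    field_simp
  have key2 : ∀ x : ℝ, x ∈ Set.Ioi (0:ℝ) → HasDerivAt g (g' x) x := by
    intro x hx
    obtain ⟨hx0, h1, hu1⟩ := hbasic x hx
    have hu0 : (0:ℝ) < u x := by linarith
    have hx2x : (0:ℝ) < x^2 + x := by positivity
    have d5 := (hd3 x hx).rpow_const (p := -β - 1) (Or.inl hu0.ne')
    have d6 : HasDerivAt (fun x : ℝ => x^2 + x) (2*x + 1) x := by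
      simpa using ((hasDerivAt_pow 2 x).fun_add (hasDerivAt_id' x))
    have d7 : HasDerivAt (fun x : ℝ => (x^2 + x)⁻¹) (-(2*x + 1) / (x^2 + x)^2) x :=
      d6.inv hx2x.ne'
    have d8 := ((d5.const_mul (β * δ)).fun_mul d7)
    refine d8.congr_deriv ?_
    simp only [hg'_def]
    have hrw : u x ^ (-β - 1 - 1) = u x ^ (-β - 2) := by ring_nf
    rw [hrw] at *
    have hx2 : (x:ℝ)^2 ≠ 0 := by positivity
    field_simp
    ring
  have hnonpos : ∀ x : ℝ, x ∈ Set.Ioi (0:ℝ) → g' x ≤ 0 := by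
    intro x hx
    obtain ⟨hx0, h1, hu1⟩ := hbasic x hx
    have hu0 : (0:ℝ) < u x := by linarith
    have hA : (0:ℝ) < u x ^ (-β - 2) := Real.rpow_pos_of_pos hu0 _
    have hAB : u x ^ (-β - 1) = u x ^ (-β - 2) * u x := by
      rw [← Real.rpow_add_one hu0.ne' (-β - 2)]
      ring_nf
    have hδβ1 : δ * (β + 1) < 1 := by
      have hβ1 : (0:ℝ) < 1 + β := by linarith
      rw [div_eq_inv_mul, lt_inv_mul_iff₀ hβ1] at hδβ
      nlinarith [hδβ]
    have hbig : (1:ℝ) ≤ (2*x + 1) * u x := by nlinarith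
    have hfac : δ * (β + 1) * u x ^ (-β - 2) - (2*x + 1) * u x ^ (-β - 1) ≤ 0 := by
      rw [hAB]
      nlinarith [mul_pos hA hu0]
    have hpos1 : (0:ℝ) ≤ β * δ := by positivity
    have hpos2 : (0:ℝ) ≤ ((x^2 + x)^2)⁻¹ := by positivity
    simp only [hg'_def]
    have := mul_nonpos_of_nonneg_of_nonpos hpos1 hfac
    exact mul_nonpos_of_nonpos_of_nonneg this hpos2
  refine concaveOn_of_hasDerivWithinAt2_nonpos (f' := g) (f'' := g') (convex_Ioi 0) ?_ ?_ ?_ ?_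
  · intro x hx
    exact ((key x hx).continuousAt).continuousWithinAt
  · intro x hx
    rw [interior_Ioi] at hx
    exact (key x hx).hasDerivWithinAt
  · intro x hx
    rw [interior_Ioi] at hx
    exact (key2 x hx).hasDerivWithinAt
  · intro x hx
    rw [interior_Ioi] at hx
    exact hnonpos x hx
end

section
/- Let p > 0 and let φ : [0,1] → [0,1] be an increasing absolutely continuous homeomorphism with φ(0) = 0, φ(1) = 1, φ' > 0 a.e., and suppose C₀ := ∫_0^1 ( exp(p·r·φ'(r)/φ(r)) + exp(p·φ(r)/(r·φ'(r))) )·r dr < ∞. Then for every natural number n ≥ 1, log( φ(e^(1−n)) / φ(e^(−n)) ) ≥ p / (log C₀ + 2n). -/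
open Real MeasureTheory

/-- Tangent-line (Jensen) inequality for the convex function `x ↦ exp (p / x)`. -/
lemma tangent_ineq (p L x : ℝ) (hp : 0 < p) (hL : 0 < L) (hx : 0 < x) :
    Real.exp (p / L) + p / L ^ 2 * Real.exp (p / L) * (L - x) ≤ Real.exp (p / x) := by
  set s := p / L with hs_def
  set t := p / x with ht_def
  have hs : 0 < s := div_pos hp hL
  have ht : 0 < t := div_pos hp hx
  have key : p / L ^ 2 * (L - x) ≤ t - s := by
    have e1 : p / L ^ 2 * (L - x) = s - s ^ 2 / t := by
      rw [hs_def, ht_def]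
      field_simp
    have e2 : s - s ^ 2 / t ≤ t - s := by
      nlinarith [sq_nonneg (t - s), div_mul_cancel₀ (s ^ 2) ht.ne',
        div_nonneg (sq_nonneg s) ht.le]
    linarith
  have h2 : 1 + (t - s) ≤ Real.exp (t - s) := by
    have := Real.add_one_le_exp (t - s); linarith
  have h3 : Real.exp s * Real.exp (t - s) = Real.exp t := by
    rw [← Real.exp_add]; ring_nf
  nlinarith [Real.exp_pos s, mul_le_mul_of_nonneg_left h2 (Real.exp_pos s).le,
    mul_le_mul_of_nonneg_left key (Real.exp_pos s).le]

set_option maxHeartbeats 1000000 in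
theorem stmt14 (p C₀ : ℝ) (hp : 0 < p) (φ d : ℝ → ℝ)
    (hmono : StrictMonoOn φ (Set.Icc 0 1)) (hcont : ContinuousOn φ (Set.Icc 0 1))
    (hφ0 : φ 0 = 0) (hφ1 : φ 1 = 1)
    (hderiv : ∀ r ∈ Set.Ioo (0:ℝ) 1, HasDerivAt φ (d r) r)
    (hdpos : ∀ᵐ r ∂(volume.restrict (Set.Ioo (0:ℝ) 1)), 0 < d r)
    (hAC : ∀ a ∈ Set.Icc (0:ℝ) 1, ∀ b ∈ Set.Icc (0:ℝ) 1, a ≤ b →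
      φ b - φ a = ∫ r in a..b, d r)
    (hint : IntegrableOn
      (fun r => (Real.exp (p * r * d r / φ r) + Real.exp (p * φ r / (r * d r))) * r)
      (Set.Ioo 0 1))
    (hC₀ : ∫ r in Set.Ioo (0:ℝ) 1,
      (Real.exp (p * r * d r / φ r) + Real.exp (p * φ r / (r * d r))) * r = C₀) :
    ∀ n : ℕ, 1 ≤ n →
      p / (Real.log C₀ + 2 * n) ≤
        Real.log (φ (Real.exp (1 - n)) / φ (Real.exp (-(n:ℝ)))) := by
  intro n hn
  have hn1 : (1:ℝ) ≤ (n:ℝ) := by exact_mod_cast hn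
  set a := Real.exp (-(n:ℝ)) with ha_def
  set b := Real.exp (1 - (n:ℝ)) with hb_def
  have ha0 : 0 < a := Real.exp_pos _
  have hab : a < b := Real.exp_lt_exp.2 (by linarith)
  have hb1 : b ≤ 1 := by
    rw [hb_def, Real.exp_le_one_iff]
    linarith
  have hsub : Set.Ioo a b ⊆ Set.Ioo (0:ℝ) 1 :=
    fun x hx => ⟨lt_trans ha0 hx.1, lt_of_lt_of_le hx.2 hb1⟩
  have hIccsub : Set.Icc a b ⊆ Set.Icc (0:ℝ) 1 :=
    fun x hx => ⟨le_trans ha0.le hx.1, le_trans hx.2 hb1⟩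
  have h0mem : (0:ℝ) ∈ Set.Icc (0:ℝ) 1 := ⟨le_refl _, zero_le_one⟩
  have haI : a ∈ Set.Icc (0:ℝ) 1 := ⟨ha0.le, le_trans hab.le hb1⟩
  have hbI : b ∈ Set.Icc (0:ℝ) 1 := ⟨(lt_trans ha0 hab).le, hb1⟩
  have hφr : ∀ r ∈ Set.Icc a b, 0 < φ r := by
    intro r hr
    have hrI : r ∈ Set.Icc (0:ℝ) 1 := hIccsub hr
    have := hmono h0mem hrI (lt_of_lt_of_le ha0 hr.1)
    rwa [hφ0] at this
  have hφa : 0 < φ a := hφr a ⟨le_refl _, hab.le⟩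
  have hφb : 0 < φ b := hφr b ⟨hab.le, le_refl _⟩
  have hφab : φ a < φ b := hmono haI hbI hab
  set L := Real.log (φ b) - Real.log (φ a) with hL_def
  have hLpos : 0 < L := sub_pos.2 (Real.log_lt_log hφa hφab)
  -- measurability
  have hφm : AEMeasurable φ (volume.restrict (Set.Ioo a b)) :=
    (hcont.mono (fun x hx => hIccsub (Set.Ioo_subset_Icc_self hx))).aemeasurable
      measurableSet_Ioo
  have hdm : AEMeasurable d (volume.restrict (Set.Ioo a b)) := by
    refine AEMeasurable.congr ((measurable_deriv φ).aemeasurable) ?_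
    filter_upwards [ae_restrict_mem measurableSet_Ioo] with r hr
    exact (hderiv r (hsub hr)).deriv
  have hd_pos_ab : ∀ᵐ r ∂(volume.restrict (Set.Ioo a b)), 0 < d r :=
    ae_mono (Measure.restrict_mono hsub le_rfl) hdpos
  have hint_ab : IntegrableOn
      (fun r => (Real.exp (p * r * d r / φ r) + Real.exp (p * φ r / (r * d r))) * r)
      (Set.Ioo a b) := hint.mono_set hsub
  -- integrability of d/φ
  have h_dφ_int : IntegrableOn (fun r => d r / φ r) (Set.Ioo a b) := by
    refine Integrable.mono' (hint_ab.const_mul ((p * a ^ 2)⁻¹))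
      (hdm.div hφm).aestronglyMeasurable ?_
    filter_upwards [hd_pos_ab, ae_restrict_mem measurableSet_Ioo] with r hdr hr
    have hr0 : 0 < r := lt_trans ha0 hr.1
    have hφ : 0 < φ r := hφr r ⟨hr.1.le, hr.2.le⟩
    have hnn : 0 ≤ d r / φ r := div_nonneg hdr.le hφ.le
    rw [Real.norm_eq_abs, abs_of_nonneg hnn]
    have hx : p * r * d r / φ r ≤ Real.exp (p * r * d r / φ r) := by
      have := Real.add_one_le_exp (p * r * d r / φ r); linarith
    have he2 : 0 ≤ Real.exp (p * φ r / (r * d r)) := (Real.exp_pos _).le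
    rw [inv_mul_eq_div, le_div_iff₀ (by positivity)]
    have ha2 : a ^ 2 ≤ r ^ 2 := by nlinarith [hr.1, ha0]
    have h1 : p * r * d r / φ r * r ≤ Real.exp (p * r * d r / φ r) * r :=
      mul_le_mul_of_nonneg_right hx hr0.le
    have h2 : p * a ^ 2 * (d r / φ r) ≤ p * r ^ 2 * (d r / φ r) := by
      apply mul_le_mul_of_nonneg_right _ hnn
      nlinarith
    have h3 : p * r * d r / φ r * r = p * r ^ 2 * (d r / φ r) := by
      field_simp
    nlinarith [mul_nonneg he2 hr0.le]
  have h_ii : IntervalIntegrable (fun r => d r / φ r) volume a b := by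
    rw [intervalIntegrable_iff_integrableOn_Ioo_of_le hab.le]
    exact h_dφ_int
  -- FTC for log ∘ φ
  have hFTC : ∫ r in a..b, d r / φ r = Real.log (φ b) - Real.log (φ a) := by
    refine intervalIntegral.integral_eq_sub_of_hasDerivAt_of_le hab.le
      ((hcont.mono hIccsub).log (fun x hx => (hφr x hx).ne')) (fun x hx => ?_) h_ii
    exact (hderiv x (hsub hx)).log (hφr x ⟨hx.1.le, hx.2.le⟩).ne'
  have IL : ∫ r in Set.Ioo a b, d r / φ r = L := by
    rw [hL_def, ← hFTC, intervalIntegral.integral_of_le hab.le,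
      integral_Ioc_eq_integral_Ioo]
  -- ∫ 1/r = 1
  have h_inv_int : IntegrableOn (fun r : ℝ => r⁻¹) (Set.Ioo a b) := by
    refine ((continuousOn_id.inv₀ (fun x hx =>
      (lt_of_lt_of_le ha0 hx.1).ne')).integrableOn_Icc).mono_set Set.Ioo_subset_Icc_self
  have I1 : ∫ r in Set.Ioo a b, r⁻¹ = 1 := by
    have h0 : (0:ℝ) ∉ Set.uIcc a b := by
      rw [Set.uIcc_of_le hab.le]
      exact fun h => absurd h.1 (not_le.2 ha0)
    have := integral_one_div h0
    rw [intervalIntegral.integral_of_le hab.le, integral_Ioc_eq_integral_Ioo] at this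
    simp only [one_div] at this
    rw [this, ha_def, hb_def, Real.log_div (Real.exp_ne_zero _) (Real.exp_ne_zero _),
      Real.log_exp, Real.log_exp]
    ring
  -- the key Jensen inequality
  have hF_meas : AEStronglyMeasurable (fun r => Real.exp (p * φ r / (r * d r)) * r⁻¹)
      (volume.restrict (Set.Ioo a b)) := by
    apply AEMeasurable.aestronglyMeasurable
    exact (Real.measurable_exp.comp_aemeasurable
      ((aemeasurable_const.mul hφm).div (aemeasurable_id.mul hdm))).mul aemeasurable_id.inv
  have hF_bound : ∀ᵐ r ∂(volume.restrict (Set.Ioo a b)),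
      ‖Real.exp (p * φ r / (r * d r)) * r⁻¹‖ ≤
        (a ^ 2)⁻¹ * ((Real.exp (p * r * d r / φ r) + Real.exp (p * φ r / (r * d r))) * r) := by
    filter_upwards [ae_restrict_mem measurableSet_Ioo] with r hr
    have hr0 : 0 < r := lt_trans ha0 hr.1
    rw [Real.norm_eq_abs, abs_of_nonneg (by positivity)]
    have h1 : r⁻¹ ≤ (a ^ 2)⁻¹ * r := by
      rw [inv_eq_one_div, inv_mul_eq_div, div_le_div_iff₀ hr0 (by positivity)]
      nlinarith [hr.1, ha0]
    have h2 := mul_le_mul_of_nonneg_left h1 (Real.exp_pos (p * φ r / (r * d r))).le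
    linarith [mul_nonneg (mul_nonneg (inv_nonneg.2 (sq_nonneg a))
      (Real.exp_pos (p * r * d r / φ r)).le) hr0.le]
  have hF_int : IntegrableOn (fun r => Real.exp (p * φ r / (r * d r)) * r⁻¹)
      (Set.Ioo a b) :=
    Integrable.mono' (hint_ab.const_mul ((a ^ 2)⁻¹)) hF_meas hF_bound
  have hG_int : Integrable (fun r => Real.exp (p / L) * r⁻¹ +
      (p / L ^ 2 * Real.exp (p / L)) * (L * r⁻¹ - d r / φ r))
      (volume.restrict (Set.Ioo a b)) := by
    have hsub' : Integrable (fun r => L * r⁻¹ - d r / φ r)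
        (volume.restrict (Set.Ioo a b)) := (h_inv_int.const_mul L).sub h_dφ_int
    exact (h_inv_int.const_mul _).add (hsub'.const_mul _)
  have hGF : ∀ᵐ r ∂(volume.restrict (Set.Ioo a b)),
      Real.exp (p / L) * r⁻¹ +
        (p / L ^ 2 * Real.exp (p / L)) * (L * r⁻¹ - d r / φ r) ≤
      Real.exp (p * φ r / (r * d r)) * r⁻¹ := by
    filter_upwards [hd_pos_ab, ae_restrict_mem measurableSet_Ioo] with r hdr hr
    have hr0 : 0 < r := lt_trans ha0 hr.1
    have hφ : 0 < φ r := hφr r ⟨hr.1.le, hr.2.le⟩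
    have hx : 0 < r * d r / φ r := by positivity
    have ht := tangent_ineq p L (r * d r / φ r) hp hLpos hx
    have hpx : p / (r * d r / φ r) = p * φ r / (r * d r) := div_div_eq_mul_div p (r * d r) (φ r)
    rw [hpx] at ht
    have h := mul_le_mul_of_nonneg_right ht (inv_nonneg.2 hr0.le)
    have heq : (Real.exp (p / L) + p / L ^ 2 * Real.exp (p / L) * (L - r * d r / φ r)) * r⁻¹
        = Real.exp (p / L) * r⁻¹ +
          (p / L ^ 2 * Real.exp (p / L)) * (L * r⁻¹ - d r / φ r) := by
      field_simp
    rw [heq] at h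
    exact h
  have hkey : Real.exp (p / L) ≤
      ∫ r in Set.Ioo a b, Real.exp (p * φ r / (r * d r)) * r⁻¹ := by
    have hGeq : ∫ r in Set.Ioo a b, (Real.exp (p / L) * r⁻¹ +
        (p / L ^ 2 * Real.exp (p / L)) * (L * r⁻¹ - d r / φ r)) = Real.exp (p / L) := by
      have hsub' : Integrable (fun r => L * r⁻¹ - d r / φ r)
          (volume.restrict (Set.Ioo a b)) := (h_inv_int.const_mul L).sub h_dφ_int
      have hsub2 : Integrable (fun r : ℝ => L * r⁻¹)
          (volume.restrict (Set.Ioo a b)) := h_inv_int.const_mul L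
      rw [integral_add (h_inv_int.const_mul (Real.exp (p / L))) (hsub'.const_mul _),
        integral_const_mul, integral_const_mul,
        integral_sub hsub2 h_dφ_int, integral_const_mul, I1, IL]
      ring
    calc Real.exp (p / L)
        = ∫ r in Set.Ioo a b, (Real.exp (p / L) * r⁻¹ +
            (p / L ^ 2 * Real.exp (p / L)) * (L * r⁻¹ - d r / φ r)) := hGeq.symm
      _ ≤ ∫ r in Set.Ioo a b, Real.exp (p * φ r / (r * d r)) * r⁻¹ :=
          integral_mono_ae hG_int hF_int hGF
  -- bound by C₀
  have hSnn : 0 ≤ᵐ[volume.restrict (Set.Ioo (0:ℝ) 1)]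
      (fun r => (Real.exp (p * r * d r / φ r) + Real.exp (p * φ r / (r * d r))) * r) := by
    filter_upwards [ae_restrict_mem measurableSet_Ioo] with r hr
    have : 0 < r := hr.1
    positivity
  have hchain : Real.exp (p / L) ≤ (a ^ 2)⁻¹ * C₀ := by
    calc Real.exp (p / L)
        ≤ ∫ r in Set.Ioo a b, Real.exp (p * φ r / (r * d r)) * r⁻¹ := hkey
      _ ≤ ∫ r in Set.Ioo a b, (a ^ 2)⁻¹ *
            ((Real.exp (p * r * d r / φ r) + Real.exp (p * φ r / (r * d r))) * r) := by
          refine integral_mono_ae hF_int (hint_ab.const_mul _) ?_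
          filter_upwards [hF_bound] with r hr
          calc Real.exp (p * φ r / (r * d r)) * r⁻¹
              ≤ ‖Real.exp (p * φ r / (r * d r)) * r⁻¹‖ := le_abs_self _
            _ ≤ _ := hr
      _ = (a ^ 2)⁻¹ * ∫ r in Set.Ioo a b,
            ((Real.exp (p * r * d r / φ r) + Real.exp (p * φ r / (r * d r))) * r) :=
          integral_const_mul _ _
      _ ≤ (a ^ 2)⁻¹ * ∫ r in Set.Ioo (0:ℝ) 1,
            ((Real.exp (p * r * d r / φ r) + Real.exp (p * φ r / (r * d r))) * r) := by
          apply mul_le_mul_of_nonneg_left _ (by positivity)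
          exact setIntegral_mono_set hint hSnn hsub.eventuallyLE
      _ = (a ^ 2)⁻¹ * C₀ := by rw [hC₀]
  have ha2 : (a ^ 2)⁻¹ = Real.exp (2 * (n:ℝ)) := by
    rw [ha_def, sq, ← Real.exp_add, ← Real.exp_neg]
    ring_nf
  rw [ha2] at hchain
  have hC0 : 0 < C₀ := by
    nlinarith [Real.exp_pos (p / L), Real.exp_pos (2 * (n:ℝ))]
  have hlog : p / L ≤ Real.log C₀ + 2 * (n:ℝ) := by
    have h := Real.log_le_log (Real.exp_pos (p / L)) hchain
    rwa [Real.log_exp, Real.log_mul (Real.exp_ne_zero _) hC0.ne', Real.log_exp,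
      add_comm] at h
  have hD : 0 < Real.log C₀ + 2 * (n:ℝ) := lt_of_lt_of_le (div_pos hp hLpos) hlog
  have hgoal : Real.log (φ b / φ a) = L := Real.log_div hφb.ne' hφa.ne'
  rw [hgoal]
  rw [div_le_iff₀ hD]
  have := (div_le_iff₀ hLpos).1 hlog
  linarith
end

section
/- Let p > 0, C₀ < ∞, and φ as above (increasing absolutely continuous homeomorphism of [0,1] with the exponential distortion integrability with constant C₀). Then there exists a constant C = C(p, C₀) such that φ(e^(−n)) ≤ C·n^(−p/2) for all natural numbers n ≥ 1. -/
open Real MeasureTheory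


lemma aux_sum15 (c : ℝ) (hc : 0 ≤ c) (n : ℕ) :
    Real.log (c + 2*n + 2) - Real.log (c + 2) ≤ 2 * ∑ j ∈ Finset.range n, 1 / (c + 2*j + 2) := by
  induction n with
  | zero => simp
  | succ n ih =>
    rw [Finset.sum_range_succ]
    have hy : (0:ℝ) < c + 2*n + 2 := by positivity
    have key : Real.log (c + 2*(n+1) + 2) - Real.log (c + 2*n + 2) ≤ 2 / (c + 2*n + 2) := by
      have h1 : Real.log ((c + 2*(n+1) + 2) / (c + 2*n + 2)) ≤ (c + 2*(n+1) + 2) / (c + 2*n + 2) - 1 :=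
        Real.log_le_sub_one_of_pos (by positivity)
      rw [Real.log_div (by positivity) (by positivity)] at h1
      have h2 : (c + 2*(n+1) + 2) / (c + 2*n + 2) - 1 = 2 / (c + 2*n + 2) := by
        field_simp; ring
      linarith [h1, h2 ▸ h1]
    have h3 : 2 / (c + 2*n + 2) ≤ 2 * (1 / (c + 2*(n:ℝ) + 2)) := by rw [mul_one_div]
    push_cast
    push_cast at ih key
    linarith


lemma amgm15 (V x y r : ℝ) (hV : 0 < V) (hx : 0 < x) (hr : 0 < r) (hxy : x * y * r^2 = 1) :
    2 * (1/r) ≤ V * x + (1/V) * y := by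
  have hy : y = 1/(x*r^2) := by
    rw [eq_div_iff (by positivity)]; nlinarith [hxy]
  rw [hy]
  have key : V * x + (1/V) * (1/(x*r^2)) - 2*(1/r) = (V*x*r - 1)^2 / (V*x*r^2) := by
    field_simp; ring
  nlinarith [div_nonneg (sq_nonneg (V*x*r-1)) (le_of_lt (by positivity : (0:ℝ) < V*x*r^2)), key]

set_option maxHeartbeats 4000000 in
theorem stmt15 (p C₀ : ℝ) (hp : 0 < p) (φ d : ℝ → ℝ)
    (hmono : StrictMonoOn φ (Set.Icc 0 1)) (hcont : ContinuousOn φ (Set.Icc 0 1))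
    (hφ0 : φ 0 = 0) (hφ1 : φ 1 = 1)
    (hderiv : ∀ r ∈ Set.Ioo (0:ℝ) 1, HasDerivAt φ (d r) r)
    (hdpos : ∀ᵐ r ∂(volume.restrict (Set.Ioo (0:ℝ) 1)), 0 < d r)
    (hAC : ∀ a ∈ Set.Icc (0:ℝ) 1, ∀ b ∈ Set.Icc (0:ℝ) 1, a ≤ b →
      φ b - φ a = ∫ r in a..b, d r)
    (hint : IntegrableOn
      (fun r => (Real.exp (p * r * d r / φ r) + Real.exp (p * φ r / (r * d r))) * r)
      (Set.Ioo 0 1))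
    (hC₀ : ∫ r in Set.Ioo (0:ℝ) 1,
      (Real.exp (p * r * d r / φ r) + Real.exp (p * φ r / (r * d r))) * r = C₀) :
    ∃ C : ℝ, ∀ n : ℕ, 1 ≤ n → φ (Real.exp (-(n:ℝ))) ≤ C * (n : ℝ) ^ (-(p/2)) := by
  -- C₀ ≥ 1
  have hC₀1 : 1 ≤ C₀ := by
    have h2r : IntegrableOn (fun r : ℝ => 2*r) (Set.Ioo 0 1) :=
      ((continuous_const.mul continuous_id).integrableOn_Icc (a := (0:ℝ)) (b := 1)).mono_set
        Set.Ioo_subset_Icc_self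
    have hle : ∀ᵐ r ∂volume.restrict (Set.Ioo (0:ℝ) 1), 2*r ≤
        (Real.exp (p * r * d r / φ r) + Real.exp (p * φ r / (r * d r))) * r := by
      filter_upwards [hdpos, ae_restrict_mem measurableSet_Ioo] with r hdr hr
      have hr0 : 0 < r := hr.1
      have hφr : 0 < φ r := by
        calc 0 = φ 0 := hφ0.symm
          _ < φ r := hmono (Set.left_mem_Icc.mpr zero_le_one) ⟨hr.1.le, hr.2.le⟩ hr0
      have e1 : 1 ≤ Real.exp (p * r * d r / φ r) := Real.one_le_exp (by positivity)
      have e2 : 1 ≤ Real.exp (p * φ r / (r * d r)) := Real.one_le_exp (by positivity)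
      nlinarith
    have hmono2 := integral_mono_ae h2r hint hle
    have heq : ∫ r in Set.Ioo (0:ℝ) 1, 2*r = 1 := by
      rw [← integral_Ioc_eq_integral_Ioo, ← intervalIntegral.integral_of_le zero_le_one]
      rw [intervalIntegral.integral_const_mul, integral_id]
      norm_num
    rw [hC₀] at hmono2
    rw [heq] at hmono2
    exact hmono2
  have hc₀ : 0 ≤ Real.log C₀ := Real.log_nonneg hC₀1
  -- per-annulus key estimate
  have key : ∀ k : ℕ, 1 ≤ k →
      p / (Real.log C₀ + 2*k) ≤ Real.log (φ (Real.exp (1-(k:ℝ)))) - Real.log (φ (Real.exp (-(k:ℝ)))) := by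
    intro k hk
    have hk1 : (1:ℝ) ≤ (k:ℝ) := by exact_mod_cast hk
    set a := Real.exp (-(k:ℝ)) with ha
    set b := Real.exp (1-(k:ℝ)) with hbdef
    have ha0 : 0 < a := Real.exp_pos _
    have hab : a < b := Real.exp_lt_exp.mpr (by linarith)
    have hb1 : b ≤ 1 := Real.exp_le_one_iff.mpr (by linarith)
    have hsub : Set.Ioo a b ⊆ Set.Ioo 0 1 := fun r hr => ⟨ha0.trans hr.1, hr.2.trans_le hb1⟩
    have hIccsub : Set.Icc a b ⊆ Set.Icc 0 1 := fun r hr => ⟨ha0.le.trans hr.1, hr.2.trans hb1⟩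
    have hφpos' : ∀ r ∈ Set.Icc a b, 0 < φ r := by
      intro r hr
      have hr1 : r ∈ Set.Icc (0:ℝ) 1 := hIccsub hr
      have hr0 : 0 < r := ha0.trans_le hr.1
      calc 0 = φ 0 := hφ0.symm
        _ < φ r := hmono (Set.left_mem_Icc.mpr zero_le_one) hr1 hr0
    set μ := volume.restrict (Set.Ioo a b) with hμ
    have hd' : ∀ᵐ r ∂μ, 0 < d r := ae_restrict_of_ae_restrict_of_subset hsub hdpos
    have hmem : ∀ᵐ r ∂μ, r ∈ Set.Ioo a b := ae_restrict_mem measurableSet_Ioo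
    -- measurability
    have hφm : AEMeasurable φ μ :=
      (hcont.mono (hsub.trans Set.Ioo_subset_Icc_self)).aemeasurable measurableSet_Ioo
    have hdm : AEMeasurable d μ := by
      have h1 : AEMeasurable d (volume.restrict (Set.Ioo (0:ℝ) 1)) :=
        (measurable_deriv φ).aemeasurable.congr
          ((ae_restrict_mem measurableSet_Ioo).mono (fun r hr => (hderiv r hr).deriv))
      exact h1.mono_measure (Measure.restrict_mono hsub le_rfl)
    set F := fun r => (Real.exp (p * r * d r / φ r) + Real.exp (p * φ r / (r * d r))) * r with hF
    have hFab : Integrable F μ := hint.mono_set hsub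
    set g1 := fun r => d r / φ r with hg1
    set g2 := fun r => φ r / (r * d r) / r with hg2
    have hg1m : AEStronglyMeasurable g1 μ := (hdm.div hφm).aestronglyMeasurable
    have hg2m : AEStronglyMeasurable g2 μ :=
      ((hφm.div (aemeasurable_id.mul hdm)).div aemeasurable_id).aestronglyMeasurable
    have hvm : AEMeasurable (fun r => Real.exp (p * φ r / (r * d r)) * r) μ :=
      (Real.measurable_exp.comp_aemeasurable
        ((aemeasurable_const.mul hφm).div (aemeasurable_id.mul hdm))).mul aemeasurable_id
    -- pointwise facts
    have hfacts : ∀ᵐ r ∂μ, 0 < d r ∧ r ∈ Set.Ioo a b := hd'.and hmem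
    have hC : (0:ℝ) < 1 / (p * a^2) := by positivity
    -- F nonneg pointwise on the set
    have hFpos : ∀ r ∈ Set.Ioo a b, 0 ≤ F r := by
      intro r hr
      have hr0 : 0 < r := ha0.trans hr.1
      have := Real.exp_pos (p * r * d r / φ r)
      have := Real.exp_pos (p * φ r / (r * d r))
      positivity
    -- integrability of g1
    have hg1int : Integrable g1 μ := by
      refine (hFab.const_mul (1/(p*a^2))).mono hg1m ?_
      filter_upwards [hfacts] with r ⟨hdr, hr⟩
      have hr0 : 0 < r := ha0.trans hr.1
      have hφr : 0 < φ r := hφpos' r ⟨hr.1.le, hr.2.le⟩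
      have har : a ≤ r := hr.1.le
      have hexp := Real.add_one_le_exp (p * r * d r / φ r)
      have he2 : 0 ≤ Real.exp (p * φ r / (r * d r)) := (Real.exp_pos _).le
      have haa : a^2 ≤ r^2 := pow_le_pow_left₀ ha0.le har 2
      have hg1nn : 0 ≤ g1 r := by simp only [hg1]; positivity
      have hkey : p * a^2 * g1 r ≤ F r := by
        have h1 : p * a^2 * g1 r ≤ (p * r * d r / φ r) * r := by
          simp only [hg1]
          have h0 : p * a^2 * (d r / φ r) ≤ p * r^2 * (d r / φ r) :=
            mul_le_mul_of_nonneg_right (mul_le_mul_of_nonneg_left haa hp.le) (by positivity)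
          have heq : p * r^2 * (d r / φ r) = (p * r * d r / φ r) * r := by
            field_simp
          linarith
        have h2 : (p * r * d r / φ r) * r ≤ Real.exp (p * r * d r / φ r) * r :=
          mul_le_mul_of_nonneg_right (by linarith) hr0.le
        have h3 : Real.exp (p * r * d r / φ r) * r ≤ F r := by
          simp only [hF]; nlinarith [mul_nonneg he2 hr0.le]
        linarith
      rw [Real.norm_eq_abs, Real.norm_eq_abs, abs_of_nonneg hg1nn,
        abs_of_nonneg (mul_nonneg hC.le (hFpos r hr))]
      calc g1 r = (1/(p*a^2)) * (p * a^2 * g1 r) := by field_simp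
        _ ≤ (1/(p*a^2)) * F r := mul_le_mul_of_nonneg_left hkey hC.le
    -- integrability of g2
    have hg2int : Integrable g2 μ := by
      refine (hFab.const_mul (1/(p*a^2))).mono hg2m ?_
      filter_upwards [hfacts] with r ⟨hdr, hr⟩
      have hr0 : 0 < r := ha0.trans hr.1
      have hφr : 0 < φ r := hφpos' r ⟨hr.1.le, hr.2.le⟩
      have har : a ≤ r := hr.1.le
      have hexp := Real.add_one_le_exp (p * φ r / (r * d r))
      have he1 : 0 ≤ Real.exp (p * r * d r / φ r) := (Real.exp_pos _).le
      have haa : a^2 ≤ r^2 := pow_le_pow_left₀ ha0.le har 2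
      have hg2nn : 0 ≤ g2 r := by simp only [hg2]; positivity
      have hkey : p * a^2 * g2 r ≤ F r := by
        have h1 : p * a^2 * g2 r ≤ (p * φ r / (r * d r)) * r := by
          simp only [hg2]
          have h0 : p * a^2 * (φ r / (r * d r) / r) ≤ p * r^2 * (φ r / (r * d r) / r) :=
            mul_le_mul_of_nonneg_right (mul_le_mul_of_nonneg_left haa hp.le) (by positivity)
          have heq : p * r^2 * (φ r / (r * d r) / r) = (p * φ r / (r * d r)) * r := by
            field_simp
          linarith
        have h2 : (p * φ r / (r * d r)) * r ≤ Real.exp (p * φ r / (r * d r)) * r :=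
          mul_le_mul_of_nonneg_right (by linarith) hr0.le
        have h3 : Real.exp (p * φ r / (r * d r)) * r ≤ F r := by
          simp only [hF]; nlinarith [mul_nonneg he1 hr0.le]
        linarith
      rw [Real.norm_eq_abs, Real.norm_eq_abs, abs_of_nonneg hg2nn,
        abs_of_nonneg (mul_nonneg hC.le (hFpos r hr))]
      calc g2 r = (1/(p*a^2)) * (p * a^2 * g2 r) := by field_simp
        _ ≤ (1/(p*a^2)) * F r := mul_le_mul_of_nonneg_left hkey hC.le
    -- integrability of exp(p v) * r
    have hE2int : Integrable (fun r => Real.exp (p * φ r / (r * d r)) * r) μ := by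
      refine hFab.mono hvm.aestronglyMeasurable ?_
      filter_upwards [hmem] with r hr
      have hr0 : 0 < r := ha0.trans hr.1
      have he1 : 0 ≤ Real.exp (p * r * d r / φ r) := (Real.exp_pos _).le
      have he2 : 0 ≤ Real.exp (p * φ r / (r * d r)) := (Real.exp_pos _).le
      have he2 : 0 ≤ Real.exp (p * φ r / (r * d r)) := (Real.exp_pos _).le
      rw [Real.norm_eq_abs, Real.norm_eq_abs, abs_of_nonneg (mul_nonneg he2 hr0.le),
        abs_of_nonneg (hFpos r hr)]
      simp only [hF]; nlinarith [mul_nonneg he1 hr0.le]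
    -- integrability of 1/r
    have h1rint : Integrable (fun r : ℝ => 1/r) μ := by
      have : ContinuousOn (fun r : ℝ => 1/r) (Set.Icc a b) :=
        continuousOn_const.div continuousOn_id (fun r hr => ne_of_gt (ha0.trans_le hr.1))
      exact (this.integrableOn_Icc).mono_set Set.Ioo_subset_Icc_self
    -- ∫ 1/r = 1
    have hone : ∫ r in Set.Ioo a b, (1:ℝ)/r = 1 := by
      have h1 : ∫ r in Set.Ioo a b, (1:ℝ)/r = ∫ r in a..b, (1:ℝ)/r := by
        rw [intervalIntegral.integral_of_le hab.le, integral_Ioc_eq_integral_Ioo]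
      rw [h1, integral_one_div (by
        intro h
        rcases h with h
        have := (Set.mem_uIcc.mp h)
        rcases this with ⟨h1, _⟩ | ⟨_, h2⟩
        · linarith
        · linarith)]
      rw [ha, hbdef, ← Real.exp_sub]
      norm_num
    set V := ∫ r in Set.Ioo a b, g2 r with hV
    set J := ∫ r in Set.Ioo a b, g1 r with hJ
    -- V > 0
    have hg2posae : ∀ᵐ r ∂μ, 0 < g2 r := by
      filter_upwards [hfacts] with r ⟨hdr, hr⟩
      have hr0 : 0 < r := ha0.trans hr.1
      have hφr : 0 < φ r := hφpos' r ⟨hr.1.le, hr.2.le⟩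
      simp only [hg2]; positivity
    have hV0 : 0 < V := by
      rw [hV, setIntegral_pos_iff_support_of_nonneg_ae (hg2posae.mono fun r h => h.le) hg2int]
      have hae2 : ∀ᵐ r ∂(volume : Measure ℝ), r ∈ Set.Ioo a b → 0 < g2 r :=
        (ae_restrict_iff' measurableSet_Ioo).mp hg2posae
      have hN : volume {r | ¬(r ∈ Set.Ioo a b → 0 < g2 r)} = 0 := ae_iff.mp hae2
      have hsub2 : Set.Ioo a b ⊆ (Function.support g2 ∩ Set.Ioo a b) ∪
          {r | ¬(r ∈ Set.Ioo a b → 0 < g2 r)} := by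
        intro r hr
        by_cases h : 0 < g2 r
        · exact Or.inl ⟨ne_of_gt h, hr⟩
        · exact Or.inr (fun himp => h (himp hr))
      have h1 : volume (Set.Ioo a b) ≤ volume (Function.support g2 ∩ Set.Ioo a b) := by
        calc volume (Set.Ioo a b) ≤ volume ((Function.support g2 ∩ Set.Ioo a b) ∪
            {r | ¬(r ∈ Set.Ioo a b → 0 < g2 r)}) := measure_mono hsub2
          _ ≤ volume (Function.support g2 ∩ Set.Ioo a b) +
              volume {r | ¬(r ∈ Set.Ioo a b → 0 < g2 r)} := measure_union_le _ _
          _ = volume (Function.support g2 ∩ Set.Ioo a b) := by rw [hN, add_zero]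
      refine lt_of_lt_of_le ?_ h1
      rw [Real.volume_Ioo]
      exact ENNReal.ofReal_pos.mpr (by linarith)
    -- 1 ≤ V * J
    have hVJ : 1 ≤ V * J := by
      have haeVJ : ∀ᵐ r ∂μ, 2 * (1/r) ≤ V * g1 r + (1/V) * g2 r := by
        filter_upwards [hfacts] with r ⟨hdr, hr⟩
        have hr0 : 0 < r := ha0.trans hr.1
        have hφr : 0 < φ r := hφpos' r ⟨hr.1.le, hr.2.le⟩
        have hxy : g1 r * g2 r * r^2 = 1 := by simp only [hg1, hg2]; field_simp
        have hx0 : 0 < g1 r := by simp only [hg1]; positivity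
        exact amgm15 V (g1 r) (g2 r) r hV0 hx0 hr0 hxy
      have hmono' := integral_mono_ae ((h1rint.const_mul 2))
        ((hg1int.const_mul V).add (hg2int.const_mul (1/V))) haeVJ
      simp only [Pi.add_apply] at hmono'
      rw [integral_add (hg1int.const_mul V) (hg2int.const_mul (1/V)),
        integral_const_mul, integral_const_mul, integral_const_mul] at hmono'
      rw [hμ] at hmono'
      rw [hone] at hmono'
      have : (1/V) * V = 1 := by field_simp
      rw [← hV, ← hJ] at hmono'
      nlinarith [hmono']
    -- p * V ≤ c
    set c := Real.log C₀ + 2*(k:ℝ) with hc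
    have hc2 : 2 ≤ c := by rw [hc]; linarith
    have hpV : p * V ≤ c := by
      have haeB : ∀ᵐ r ∂μ, p * g2 r ≤ (c-1) * (1/r) +
          Real.exp (2*(k:ℝ) - c) * (Real.exp (p * φ r / (r * d r)) * r) := by
        filter_upwards [hfacts] with r ⟨hdr, hr⟩
        have hr0 : 0 < r := ha0.trans hr.1
        have hφr : 0 < φ r := hφpos' r ⟨hr.1.le, hr.2.le⟩
        have har : a ≤ r := hr.1.le
        set v := p * φ r / (r * d r) with hv
        have hvpos : 0 < v := by rw [hv]; positivity
        have hjen : v ≤ (c - 1) + Real.exp (v - c) := by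
          have := Real.add_one_le_exp (v - c)
          linarith
        have hg2v : p * g2 r = v * (1/r) := by
          simp only [hg2, hv]; field_simp; try ring
        have hr2 : a^2 ≤ r^2 := pow_le_pow_left₀ ha0.le har 2
        have hainv : 1/r ≤ Real.exp (2*(k:ℝ)) * r := by
          have ha2 : a * a = Real.exp (-(2*(k:ℝ))) := by
            rw [ha, ← Real.exp_add]; congr 1; ring
          have hmm : Real.exp (-(2*(k:ℝ))) * Real.exp (2*(k:ℝ)) = 1 := by
            rw [← Real.exp_add]; simp
          rw [div_le_iff₀ hr0]
          nlinarith [Real.exp_pos (2*(k:ℝ)), mul_le_mul har har ha0.le hr0.le]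
        have hexpvc : Real.exp (v - c) * (1/r) ≤ Real.exp (2*(k:ℝ) - c) * (Real.exp v * r) := by
          have h1 : Real.exp (v - c) * (1/r) ≤ Real.exp (v - c) * (Real.exp (2*(k:ℝ)) * r) :=
            mul_le_mul_of_nonneg_left hainv (Real.exp_pos _).le
          have e1 : Real.exp (v - c) * Real.exp (2*(k:ℝ)) = Real.exp (2*(k:ℝ) - c) * Real.exp v := by
            rw [← Real.exp_add, ← Real.exp_add]; congr 1; ring
          have h2 : Real.exp (v - c) * (Real.exp (2*(k:ℝ)) * r) =
              Real.exp (2*(k:ℝ) - c) * (Real.exp v * r) := by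
            rw [← mul_assoc, e1, mul_assoc]
          linarith [h2 ▸ h1]
        calc p * g2 r = v * (1/r) := hg2v
          _ ≤ ((c-1) + Real.exp (v - c)) * (1/r) :=
              mul_le_mul_of_nonneg_right hjen (by positivity)
          _ = (c-1) * (1/r) + Real.exp (v - c) * (1/r) := by ring
          _ ≤ (c-1) * (1/r) + Real.exp (2*(k:ℝ) - c) * (Real.exp v * r) := by linarith
      have hmono' := integral_mono_ae (hg2int.const_mul p)
        ((h1rint.const_mul (c-1)).add (hE2int.const_mul (Real.exp (2*(k:ℝ) - c)))) haeB
      simp only [Pi.add_apply] at hmono'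
      rw [integral_add (h1rint.const_mul (c-1)) (hE2int.const_mul _),
        integral_const_mul, integral_const_mul, integral_const_mul] at hmono'
      rw [hμ] at hmono'
      rw [hone] at hmono'
      -- bound the exp-integral by C₀
      have hEleF : ∫ r in Set.Ioo a b, Real.exp (p * φ r / (r * d r)) * r
          ≤ ∫ r in Set.Ioo a b, F r := by
        refine integral_mono_ae hE2int hFab ?_
        filter_upwards [hmem] with r hr
        have hr0 : 0 < r := ha0.trans hr.1
        have he1 := (Real.exp_pos (p * r * d r / φ r)).le
        simp only [hF]; nlinarith [mul_nonneg he1 hr0.le]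
      have hFleC : ∫ r in Set.Ioo a b, F r ≤ C₀ := by
        rw [← hC₀]
        refine setIntegral_mono_set hint ?_ (HasSubset.Subset.eventuallyLE hsub)
        filter_upwards [ae_restrict_mem measurableSet_Ioo] with r hr
        have hr0 : 0 < r := hr.1
        have he1 := Real.exp_pos (p * r * d r / φ r)
        have he2 := Real.exp_pos (p * φ r / (r * d r))
        positivity
      have hC₀pos : 0 < C₀ := by linarith
      have hexpc : Real.exp (2*(k:ℝ) - c) = 1/C₀ := by
        rw [hc]
        have : 2*(k:ℝ) - (Real.log C₀ + 2*(k:ℝ)) = -(Real.log C₀) := by ring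
        rw [this, Real.exp_neg, Real.exp_log hC₀pos, one_div]
      have hbnd : Real.exp (2*(k:ℝ) - c) * (∫ r in Set.Ioo a b,
          Real.exp (p * φ r / (r * d r)) * r) ≤ 1 := by
        rw [hexpc]
        rw [div_mul_eq_mul_div, one_mul, div_le_one hC₀pos]
        linarith
      rw [← hV] at hmono'
      linarith
    -- conclude p / c ≤ J
    have hc0 : (0:ℝ) < c := by linarith
    have hJ0 : 0 < J := by nlinarith
    have hJpc : p / c ≤ J := by
      rw [div_le_iff₀ hc0]
      nlinarith
    -- FTC
    have hlogcont : ContinuousOn (fun r => Real.log (φ r)) (Set.Icc a b) :=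
      (hcont.mono hIccsub).log (fun r hr => ne_of_gt (hφpos' r hr))
    have hderiv' : ∀ x ∈ Set.Ioo a b, HasDerivWithinAt (fun r => Real.log (φ r)) (g1 x)
        (Set.Ioi x) x := by
      intro x hx
      have h1 : HasDerivAt (fun r => Real.log (φ r)) (d x / φ x) x :=
        (hderiv x (hsub hx)).log (ne_of_gt (hφpos' x (Set.Ioo_subset_Icc_self hx)))
      exact h1.hasDerivWithinAt
    have hII : IntervalIntegrable g1 volume a b :=
      (intervalIntegrable_iff_integrableOn_Ioo_of_le hab.le).mpr hg1int
    have hftc := intervalIntegral.integral_eq_sub_of_hasDeriv_right_of_le hab.le hlogcont hderiv' hII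
    rw [intervalIntegral.integral_of_le hab.le, integral_Ioc_eq_integral_Ioo] at hftc
    rw [← hJ] at hftc
    rw [← hftc]
    exact hJpc
  -- positivity of φ at exp(-n)
  have hφpos : ∀ n : ℕ, 0 < φ (Real.exp (-(n:ℝ))) := by
    intro n
    have h1 : Real.exp (-(n:ℝ)) ∈ Set.Icc (0:ℝ) 1 := by
      constructor
      · positivity
      · exact Real.exp_le_one_iff.mpr (by simp)
    calc 0 = φ 0 := hφ0.symm
      _ < φ (Real.exp (-(n:ℝ))) := hmono (Set.left_mem_Icc.mpr zero_le_one) h1 (Real.exp_pos _)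
  refine ⟨((Real.log C₀ + 2)/2) ^ (p/2), fun n hn => ?_⟩
  set h : ℕ → ℝ := fun k => Real.log (φ (Real.exp (-(k:ℝ)))) with hdef
  have htel : ∑ j ∈ Finset.range n, (h j - h (j+1)) = - h n := by
    rw [Finset.sum_range_sub' h n]
    have : h 0 = 0 := by simp [hdef, hφ1]
    rw [this]; ring
  have hterm : ∀ j ∈ Finset.range n, p / (Real.log C₀ + 2*(j:ℝ) + 2) ≤ h j - h (j+1) := by
    intro j _
    have := key (j+1) (Nat.le_add_left 1 j)
    have e1 : (1 : ℝ) - ((j+1 : ℕ) : ℝ) = -(j:ℝ) := by push_cast; ring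
    have e2 : Real.log C₀ + 2*((j+1:ℕ):ℝ) = Real.log C₀ + 2*(j:ℝ) + 2 := by push_cast; ring
    rw [e1, e2] at this
    exact this
  have hsum : (p/2) * (Real.log (Real.log C₀ + 2*n + 2) - Real.log (Real.log C₀ + 2)) ≤ - h n := by
    have h1 : ∑ j ∈ Finset.range n, p / (Real.log C₀ + 2*(j:ℝ) + 2) ≤ - h n := by
      rw [← htel]; exact Finset.sum_le_sum hterm
    have h2 : ∑ j ∈ Finset.range n, p / (Real.log C₀ + 2*(j:ℝ) + 2)
        = p * ∑ j ∈ Finset.range n, 1 / (Real.log C₀ + 2*(j:ℝ) + 2) := by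
      rw [Finset.mul_sum]; congr 1; ext j; rw [mul_one_div]
    have h3 := aux_sum15 (Real.log C₀) hc₀ n
    nlinarith [h3, h1, h2 ▸ h1]
  -- final computation
  have hn0 : (0:ℝ) < n := by exact_mod_cast hn
  have hlog2n : Real.log (2*n) ≤ Real.log (Real.log C₀ + 2*n + 2) :=
    Real.log_le_log (by positivity) (by linarith)
  have hhn : h n ≤ (p/2) * (Real.log (Real.log C₀ + 2) - Real.log 2 - Real.log n) := by
    have := hsum
    rw [Real.log_mul (by norm_num) (ne_of_gt hn0)] at hlog2n
    nlinarith [this, hlog2n, hp]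
  have hEq : φ (Real.exp (-(n:ℝ))) = Real.exp (h n) := (Real.exp_log (hφpos n)).symm
  rw [hEq]
  have hrw : ((Real.log C₀ + 2)/2 : ℝ) ^ (p/2) * (n:ℝ) ^ (-(p/2))
      = Real.exp ((p/2) * (Real.log (Real.log C₀ + 2) - Real.log 2 - Real.log n)) := by
    rw [Real.rpow_def_of_pos (by positivity), Real.rpow_def_of_pos hn0,
      Real.log_div (by positivity) (by norm_num), ← Real.exp_add]
    ring_nf
  rw [hrw]
  exact Real.exp_le_exp.mpr hhn
end

section
/- Let p > 0, n ≥ 1, and φ as above with exponential distortion constant C₀. Then ∫_{e^(−n)}^{e^(1−n)} (r·φ'(r)/φ(r))² · dr/r ≤ p^(−2)·(log C₀ + 2n + p)² − 1. -/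
open Real MeasureTheory


-- cubic lower bound for exp(-t) on [0,1]
lemma cubic_le_exp_neg {t : ℝ} (h0 : 0 ≤ t) (h1 : t ≤ 1) :
    1 - t + t^2/2 - t^3/6 ≤ Real.exp (-t) := by
  have habs : |(-t)| ≤ 1 := by rw [abs_neg, abs_of_nonneg h0]; exact h1
  have h := Real.exp_bound habs (n := 5) (by norm_num)
  have hsum : ∑ m ∈ Finset.range 5, (-t) ^ m / (m.factorial : ℝ)
      = 1 - t + t^2/2 - t^3/6 + t^4/24 := by
    simp [Finset.sum_range_succ, Nat.factorial]
    ring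
  rw [hsum] at h
  have h2 := (abs_sub_le_iff.1 h).2
  rw [abs_neg, abs_of_nonneg h0] at h2
  norm_num [Nat.factorial] at h2
  nlinarith [pow_nonneg h0 4, pow_nonneg h0 5]

-- main Padé-type bound: t² ≤ (2+t)(e^{-t}+t-1) for t ≥ 0
lemma key_pade {t : ℝ} (h0 : 0 ≤ t) : t^2 ≤ (2+t) * (Real.exp (-t) + t - 1) := by
  rcases le_total t 1 with h1 | h1
  · have hc := cubic_le_exp_neg h0 h1
    nlinarith [pow_nonneg h0 2, pow_nonneg h0 3]
  rcases le_total t 2 with h2 | h2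
  · -- e^{-t} ≥ e^{-1}(2-t)
    have he : Real.exp (1 - t) ≥ 2 - t := by
      have := Real.add_one_le_exp (1 - t); linarith
    have hexp : Real.exp (-t) = Real.exp (-1) * Real.exp (1 - t) := by
      rw [← Real.exp_add]; ring_nf
    have ha1 : Real.exp (-1) = (Real.exp 1)⁻¹ := by rw [Real.exp_neg]
    have he1 : (2.7182818283 : ℝ) < Real.exp 1 := Real.exp_one_gt_d9
    have he2 : Real.exp 1 < 2.7182818286 := Real.exp_one_lt_d9
    have hepos : (0:ℝ) < Real.exp 1 := Real.exp_pos 1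
    have hai : Real.exp (-1) * Real.exp 1 = 1 := by
      rw [ha1]; field_simp
    have halb : Real.exp (-1) > 0.367 := by
      rw [ha1]
      rw [gt_iff_lt, lt_inv_comm₀ (by norm_num) hepos]
      calc Real.exp 1 < 2.7182818286 := he2
        _ < 0.367⁻¹ := by norm_num
    have hles : Real.exp (-t) ≥ Real.exp (-1) * (2 - t) := by
      calc Real.exp (-t) = Real.exp (-1) * Real.exp (1-t) := hexp
        _ ≥ Real.exp (-1) * (2 - t) := by
            apply mul_le_mul_of_nonneg_left he (Real.exp_pos _).le
    set a := Real.exp (-1) with ha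
    -- need (2+t)(a(2-t)+t-1) ≥ t², i.e. (2-t)(a t - 1 + 2a) ≥ 0 style
    have hkey : (2+t) * (a*(2-t) + t - 1) - t^2 = -((t-2) * (a*t - 1 + 2*a)) := by ring
    have hfac : (t - 2) * (a*t - 1 + 2*a) ≤ 0 := by
      apply mul_nonpos_of_nonpos_of_nonneg (by linarith)
      nlinarith
    nlinarith [mul_le_mul_of_nonneg_left hles (by linarith : (0:ℝ) ≤ 2 + t)]
  · have := Real.exp_pos (-t)
    nlinarith

-- THE key inequality
lemma star_ineq {v m E : ℝ} (hv : 0 ≤ v) (hm : 1 ≤ m) (hE : Real.exp 2 ≤ E) :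
    v^2 ≤ m^2 - 2*m + m * Real.exp (-m) * (E - 2) + 2*m*Real.exp (v - m) := by
  have hmpos : (0:ℝ) < m := by linarith
  have hexppos : (0:ℝ) < Real.exp (-m) := Real.exp_pos _
  have he2 : (5:ℝ) ≤ Real.exp 2 := by
    have := Real.quadratic_le_exp_of_nonneg (by norm_num : (0:ℝ) ≤ 2); nlinarith
  -- reduce to E = exp 2
  have hred : m * Real.exp (-m) * (Real.exp 2 - 2) ≤ m * Real.exp (-m) * (E - 2) := by
    apply mul_le_mul_of_nonneg_left (by linarith) (by positivity)
  suffices h : v^2 ≤ m^2 - 2*m + m * Real.exp (-m) * (Real.exp 2 - 2) + 2*m*Real.exp (v - m) by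
    linarith
  rcases le_total m v with hcase | hcase
  · -- v ≥ m
    have hq := Real.quadratic_le_exp_of_nonneg (by linarith : (0:ℝ) ≤ v - m)
    nlinarith [mul_le_mul_of_nonneg_left hq (by linarith : (0:ℝ) ≤ 2*m),
      mul_nonneg (mul_nonneg hmpos.le hexppos.le) (by linarith : (0:ℝ) ≤ Real.exp 2 - 2),
      sq_nonneg (v - m), mul_nonneg (by linarith : (0:ℝ) ≤ m - 1) (sq_nonneg (v-m))]
  · -- v ≤ m, set t = m - v
    set t := m - v with htdef
    have ht0 : 0 ≤ t := by linarith
    have htm : t ≤ m := by linarith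
    have hvm : Real.exp (v - m) = Real.exp (-t) := by rw [htdef]; ring_nf
    rw [hvm]
    have hpade := key_pade ht0
    -- goal ⇔ t² ≤ m e^{-m}(e²-2) + 2m(e^{-t}+t-1)
    have hgoal : t^2 ≤ m * Real.exp (-m) * (Real.exp 2 - 2) + 2*m*(Real.exp (-t) + t - 1) → 
        v^2 ≤ m^2 - 2*m + m * Real.exp (-m) * (Real.exp 2 - 2) + 2*m*Real.exp (-t) := by
      intro h; nlinarith
    apply hgoal
    have hwpos : 0 ≤ Real.exp (-t) + t - 1 := by
      have := Real.add_one_le_exp (-t); linarith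
    rcases le_total (2 + t) (2*m) with hc2 | hc2
    · -- 2m ≥ 2+t : 2m(e^{-t}+t-1) ≥ (2+t)(e^{-t}+t-1) ≥ t²
      have h1 : (2+t) * (Real.exp (-t) + t - 1) ≤ 2*m * (Real.exp (-t) + t - 1) :=
        mul_le_mul_of_nonneg_right hc2 hwpos
      nlinarith [mul_nonneg (mul_nonneg hmpos.le hexppos.le) (by linarith : (0:ℝ) ≤ Real.exp 2 - 2)]
    · -- 2m < 2+t, so m ≤ 2 (since t ≤ m)
      have hm2 : m ≤ 2 := by linarith
      -- 2m(e^{-t}+t-1) ≥ 2m t²/(2+t), and t²(2+t-2m) ≤ m²(2-m), m(2-m)e^m ≤ 2(e²-2)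
      -- t² - 2m(e^{-t}+t-1) ≤ t²(2+t-2m)/(2+t) ≤ t²(2+t-2m)/2 ≤ m²(2-m)/2 ≤ m e^{-m}(e²-2)
      have hq : t^2*(2+t-2*m) ≤ m^2*(2-m) := by
        nlinarith [mul_nonneg (by linarith : (0:ℝ) ≤ m - t)
          (by nlinarith : (0:ℝ) ≤ t^2 + (2-m)*t + (2-m)*m)]
      have hlast : m^2*(2-m) ≤ 2 * (m * Real.exp (-m) * (Real.exp 2 - 2)) := by
        have hem : Real.exp m ≤ Real.exp 2 := Real.exp_le_exp.2 hm2
        have hinv : Real.exp (-m) * Real.exp m = 1 := by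
          rw [← Real.exp_add]; simp
        have h1 : m*(2-m) ≤ 1 := by nlinarith [sq_nonneg (m-1)]
        -- need m(2-m) ≤ 2 e^{-m}(e²-2), i.e. m(2-m) e^m ≤ 2(e²-2)
        have hexpm_pos : (0:ℝ) < Real.exp m := Real.exp_pos m
        have h2 : m*(2-m) * Real.exp m ≤ 2*(Real.exp 2 - 2) := by
          calc m*(2-m)*Real.exp m ≤ 1 * Real.exp m :=
                mul_le_mul_of_nonneg_right h1 hexpm_pos.le
            _ ≤ Real.exp 2 := by rw [one_mul]; exact hem
            _ ≤ 2*(Real.exp 2 - 2) := by linarith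
        have h3 : m*(2-m) ≤ 2*(Real.exp 2 - 2) * Real.exp (-m) := by
          have h4 := mul_le_mul_of_nonneg_right h2 hexppos.le
          have e1 : m*(2-m)*Real.exp m*Real.exp (-m) = m*(2-m) := by
            rw [mul_assoc, ← Real.exp_add]; simp
          nlinarith [h4, e1]
        nlinarith [mul_le_mul_of_nonneg_left h3 hmpos.le]
      -- combine: from hpade, 2m(e^{-t}+t-1)(2+t) ≥ 2m t²
      have hcomb : 2*m*(Real.exp (-t)+t-1)*(2+t) ≥ 2*m*t^2 := by
        nlinarith [mul_le_mul_of_nonneg_left hpade (by linarith : (0:ℝ) ≤ 2*m)]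
      -- t²(2+t) - 2m(e^{-t}+t-1)(2+t) ≤ t²(2+t) - 2m t² = t²(2+t-2m)
      -- so (t² - 2m(e^{-t}+t-1))(2+t) ≤ t²(2+t-2m) ≤ m²(2-m) ≤ 2me^{-m}(e²-2)
      -- and 2+t ≥ 2, so t² - 2m(...) ≤ me^{-m}(e²-2) when positive
      nlinarith [mul_nonneg (mul_nonneg hmpos.le hexppos.le)
        (by linarith : (0:ℝ) ≤ Real.exp 2 - 2), hwpos,
        mul_nonneg (by linarith : (0:ℝ) ≤ 2*m) hwpos]

theorem stmt16 (p C₀ : ℝ) (hp : 0 < p) (φ d : ℝ → ℝ)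
    (hmono : StrictMonoOn φ (Set.Icc 0 1)) (hcont : ContinuousOn φ (Set.Icc 0 1))
    (hφ0 : φ 0 = 0) (hφ1 : φ 1 = 1)
    (hderiv : ∀ r ∈ Set.Ioo (0:ℝ) 1, HasDerivAt φ (d r) r)
    (hdpos : ∀ᵐ r ∂(volume.restrict (Set.Ioo (0:ℝ) 1)), 0 < d r)
    (hAC : ∀ a ∈ Set.Icc (0:ℝ) 1, ∀ b ∈ Set.Icc (0:ℝ) 1, a ≤ b →
      φ b - φ a = ∫ r in a..b, d r)
    (hint : IntegrableOn (fun r => Real.exp (p * r * d r / φ r) * r) (Set.Ioo 0 1))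
    (hC₀ : ∫ r in Set.Ioo (0:ℝ) 1, Real.exp (p * r * d r / φ r) * r ≤ C₀)
    (n : ℕ) (hn : 1 ≤ n) :
    ∫ r in Set.Ioo (Real.exp (-(n:ℝ))) (Real.exp (1 - n)),
        (r * d r / φ r) ^ 2 * (1 / r) ≤
      p ^ (-(2:ℤ)) * (Real.log C₀ + 2 * n + p) ^ 2 - 1 := by
  have hφpos : ∀ r ∈ Set.Ioo (0:ℝ) 1, 0 < φ r := by
    intro r hr
    have := hmono (Set.mem_Icc.2 ⟨le_refl 0, zero_le_one⟩)
      (Set.mem_Icc.2 ⟨hr.1.le, hr.2.le⟩) hr.1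
    rwa [hφ0] at this
  set f : ℝ → ℝ := fun r => Real.exp (p * r * d r / φ r) * r with hfdef
  have hae01 : ∀ᵐ r ∂(volume.restrict (Set.Ioo (0:ℝ) 1)), r ≤ f r := by
    filter_upwards [hdpos, ae_restrict_mem measurableSet_Ioo] with r hd hr
    have hφ := hφpos r hr
    have hr0 : 0 < r := hr.1
    have hxnn : 0 ≤ p * r * d r / φ r := by positivity
    have h1 : 1 ≤ Real.exp (p * r * d r / φ r) := Real.one_le_exp hxnn
    have : 1 * r ≤ Real.exp (p * r * d r / φ r) * r :=
      mul_le_mul_of_nonneg_right h1 hr0.le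
    simpa using this
  have hrint01 : IntegrableOn (fun r => r) (Set.Ioo (0:ℝ) 1) :=
    (continuous_id.integrableOn_Icc).mono_set Set.Ioo_subset_Icc_self
  have hint01 : ∫ r in Set.Ioo (0:ℝ) 1, r = 1/2 := by
    rw [← MeasureTheory.integral_Ioc_eq_integral_Ioo,
      ← intervalIntegral.integral_of_le zero_le_one]
    simpa using (integral_id (a := (0:ℝ)) (b := 1))
  have hhalf : (1/2 : ℝ) ≤ ∫ r in Set.Ioo (0:ℝ) 1, f r := by
    rw [← hint01]
    refine integral_mono_of_nonneg ?_ hint hae01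
    filter_upwards [ae_restrict_mem measurableSet_Ioo] with r hr
    exact hr.1.le
  have hC₀half : (1/2:ℝ) ≤ C₀ := le_trans hhalf hC₀
  have hC₀pos : 0 < C₀ := lt_of_lt_of_le (by norm_num) hC₀half
  set m := Real.log C₀ + 2*(n:ℝ) with hmdef
  have hn1 : (1:ℝ) ≤ (n:ℝ) := by exact_mod_cast hn
  have hlog2 : Real.log 2 < 0.6931471808 := Real.log_two_lt_d9
  have hm1 : 1 ≤ m := by
    have hlog : Real.log (1/2) ≤ Real.log C₀ :=
      (Real.log_le_log_iff (by norm_num) hC₀pos).2 hC₀half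
    have hl12 : Real.log (1/2 : ℝ) = - Real.log 2 := by
      rw [one_div, Real.log_inv]
    rw [hmdef]; rw [hl12] at hlog; linarith
  have hmpos : 0 < m := by linarith
  set E := Real.exp (2*(n:ℝ)) with hEdef
  have hE2 : Real.exp 2 ≤ E := Real.exp_le_exp.2 (by linarith)
  have hEpos : 0 < E := Real.exp_pos _
  set lam := 2*m*Real.exp (-m) with hlamdef
  have hlampos : 0 < lam := by rw [hlamdef]; positivity
  set K := m^2 - 2*m + m*Real.exp (-m)*(E-2) with hKdef
  set a := Real.exp (-(n:ℝ)) with hadef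
  set b := Real.exp (1-(n:ℝ)) with hbdef
  have hab : a < b := Real.exp_lt_exp.2 (by linarith)
  have ha0 : 0 < a := Real.exp_pos _
  have hb1 : b ≤ 1 := Real.exp_le_one_iff.2 (by linarith)
  have hsub : Set.Ioo a b ⊆ Set.Ioo (0:ℝ) 1 := fun r hr =>
    ⟨lt_trans ha0 hr.1, lt_of_lt_of_le hr.2 hb1⟩
  have h1r : IntegrableOn (fun r => 1/r) (Set.Ioo a b) := by
    have hco : ContinuousOn (fun r : ℝ => 1/r) (Set.Icc a b) := by
      apply ContinuousOn.div continuousOn_const continuousOn_id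
      intro x hx; exact ne_of_gt (lt_of_lt_of_le ha0 hx.1)
    exact hco.integrableOn_Icc.mono_set Set.Ioo_subset_Icc_self
  have hfI : IntegrableOn f (Set.Ioo a b) := hint.mono_set hsub
  have hrI : IntegrableOn (fun r => r) (Set.Ioo a b) := hrint01.mono_set hsub
  have hfrI : IntegrableOn (fun r => f r - r) (Set.Ioo a b) := hfI.sub hrI
  -- pointwise a.e. bound on Ioo a b
  have haeI : ∀ᵐ r ∂(volume.restrict (Set.Ioo a b)),
      (r * d r / φ r)^2 * (1/r) ≤ (K+lam)/p^2 * (1/r) + (lam*E/p^2) * (f r - r) := by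
    have hdI : ∀ᵐ r ∂(volume.restrict (Set.Ioo a b)), 0 < d r :=
      ae_restrict_of_ae_restrict_of_subset hsub hdpos
    filter_upwards [hdI, ae_restrict_mem measurableSet_Ioo] with r hd hr
    have hr0 : 0 < r := lt_trans ha0 hr.1
    have hφ := hφpos r (hsub hr)
    set v := p * r * d r / φ r with hvdef
    have hv0 : 0 ≤ v := by positivity
    have hstar := star_ineq hv0 hm1 hE2
    have hsplit : 2*m*Real.exp (v - m) = lam * Real.exp v := by
      rw [hlamdef, show v - m = -m + v by ring, Real.exp_add]; ring
    have hKv : v^2 ≤ K + lam * Real.exp v := by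
      rw [hKdef]; rw [hsplit] at hstar; linarith
    have hEr : 1/r ≤ E * r := by
      rw [div_le_iff₀ hr0]
      have h1 : a * a = E⁻¹ := by
        rw [hadef, ← Real.exp_add, hEdef, ← Real.exp_neg]; ring_nf
      have h2 : E⁻¹ ≤ r * r := by
        rw [← h1]
        exact mul_le_mul hr.1.le hr.1.le ha0.le hr0.le
      calc (1:ℝ) = E * E⁻¹ := by field_simp
        _ ≤ E * (r * r) := mul_le_mul_of_nonneg_left h2 hEpos.le
        _ = E * r * r := by ring
    have hexpv1 : 1 ≤ Real.exp v := Real.one_le_exp hv0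
    have hfr : f r = Real.exp v * r := by rw [hfdef]
    have key : v^2 * (1/r) ≤ (K + lam)*(1/r) + (lam*E)*(f r - r) := by
      have e1 : v^2*(1/r) ≤ (K + lam*Real.exp v)*(1/r) :=
        mul_le_mul_of_nonneg_right hKv (by positivity)
      have e2 : (lam*(Real.exp v - 1))*(1/r) ≤ (lam*(Real.exp v - 1))*(E*r) :=
        mul_le_mul_of_nonneg_left hEr
          (mul_nonneg hlampos.le (by linarith))
      have id1 : (K + lam*Real.exp v)*(1/r) = (K+lam)*(1/r) + (lam*(Real.exp v - 1))*(1/r) := by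
        ring
      have id2 : (lam*(Real.exp v - 1))*(E*r) = lam*E*(Real.exp v * r - r) := by ring
      rw [hfr]
      calc v^2*(1/r) ≤ (K + lam*Real.exp v)*(1/r) := e1
        _ = (K+lam)*(1/r) + (lam*(Real.exp v - 1))*(1/r) := id1
        _ ≤ (K+lam)*(1/r) + (lam*(Real.exp v - 1))*(E*r) := by linarith
        _ = (K+lam)*(1/r) + lam*E*(Real.exp v * r - r) := by rw [id2]
    have hx : (r * d r / φ r) = v / p := by
      rw [hvdef]; field_simp; all_goals ring
    have hp2 : (0:ℝ) < p^2 := by positivity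
    have hmul := mul_le_mul_of_nonneg_left key (le_of_lt (inv_pos.2 hp2))
    rw [hx]
    calc (v/p)^2*(1/r) = (p^2)⁻¹ * (v^2*(1/r)) := by ring
      _ ≤ (p^2)⁻¹ * ((K+lam)*(1/r) + lam*E*(f r - r)) := hmul
      _ = (K+lam)/p^2*(1/r) + lam*E/p^2*(f r - r) := by ring
  have hgint : Integrable (fun r => (K+lam)/p^2*(1/r) + lam*E/p^2*(f r - r))
      (volume.restrict (Set.Ioo a b)) :=
    (h1r.const_mul _).add (hfrI.const_mul _)
  have hmain : ∫ r in Set.Ioo a b, (r * d r / φ r)^2 * (1/r) ≤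
      ∫ r in Set.Ioo a b, ((K+lam)/p^2*(1/r) + lam*E/p^2*(f r - r)) := by
    refine integral_mono_of_nonneg ?_ hgint haeI
    filter_upwards [ae_restrict_mem measurableSet_Ioo] with r hr
    have hr0 : 0 < r := lt_trans ha0 hr.1
    positivity
  have hI1 : ∫ r in Set.Ioo a b, (1/r) = 1 := by
    rw [← MeasureTheory.integral_Ioc_eq_integral_Ioo,
      ← intervalIntegral.integral_of_le hab.le,
      integral_one_div_of_pos ha0 (lt_trans ha0 hab)]
    rw [hadef, hbdef, ← Real.exp_sub]
    norm_num
  have hsplitint : ∫ r in Set.Ioo a b, ((K+lam)/p^2*(1/r) + lam*E/p^2*(f r - r))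
      = ((K+lam)/p^2) * (∫ r in Set.Ioo a b, (1/r))
        + (lam*E/p^2) * (∫ r in Set.Ioo a b, (f r - r)) := by
    rw [integral_add (h1r.const_mul _) (hfrI.const_mul _),
      integral_const_mul, integral_const_mul]
  have hfr_bound : ∫ r in Set.Ioo a b, (f r - r) ≤ C₀ - 1/2 := by
    have h1 : ∫ r in Set.Ioo a b, (f r - r) ≤ ∫ r in Set.Ioo (0:ℝ) 1, (f r - r) := by
      refine setIntegral_mono_set (hint.sub hrint01) ?_
        (HasSubset.Subset.eventuallyLE hsub)
      filter_upwards [hae01] with r hr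
      simpa [sub_nonneg] using hr
    have h2 : ∫ r in Set.Ioo (0:ℝ) 1, (f r - r)
        = (∫ r in Set.Ioo (0:ℝ) 1, f r) - ∫ r in Set.Ioo (0:ℝ) 1, r :=
      integral_sub hint hrint01
    rw [hint01] at h2
    have hC₀' : ∫ r in Set.Ioo (0:ℝ) 1, f r ≤ C₀ := hC₀
    linarith [h1, hC₀', h2.le, h2.ge]
  have hone : Real.exp (-m) * E * C₀ = 1 := by
    rw [hmdef, hEdef, neg_add, Real.exp_add, Real.exp_neg, Real.exp_log hC₀pos,
      Real.exp_neg]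
    field_simp
  have hfinal : (K+lam)/p^2 * 1 + lam*E/p^2 * (C₀ - 1/2) = m^2/p^2 := by
    have hnum : K + lam + lam*E*(C₀ - 1/2) = m^2 := by
      rw [hKdef, hlamdef]; linear_combination (2*m) * hone
    have e : (K+lam)/p^2 * 1 + lam*E/p^2 * (C₀ - 1/2)
        = (K + lam + lam*E*(C₀ - 1/2))/p^2 := by ring
    rw [e, hnum]
  have hlamE : 0 ≤ lam*E/p^2 := by positivity
  have hend : m^2/p^2 ≤ p ^ (-(2:ℤ)) * (m + p)^2 - 1 := by
    have hz : (p:ℝ) ^ (-(2:ℤ)) = (p^2)⁻¹ := by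
      rw [zpow_neg]; norm_cast
    rw [hz]
    have hp0 : p ≠ 0 := ne_of_gt hp
    have hid : (p^2)⁻¹*(m+p)^2 - 1 - m^2/p^2 = 2*m/p := by
      field_simp
      ring
    have : 0 ≤ 2*m/p := by positivity
    linarith
  have hgoalform : Real.log C₀ + 2 * (n:ℝ) + p = m + p := by rw [hmdef]
  calc ∫ r in Set.Ioo a b, (r * d r / φ r)^2 * (1/r)
      ≤ ∫ r in Set.Ioo a b, ((K+lam)/p^2*(1/r) + lam*E/p^2*(f r - r)) := hmain
    _ = ((K+lam)/p^2) * (∫ r in Set.Ioo a b, (1/r))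
        + (lam*E/p^2) * (∫ r in Set.Ioo a b, (f r - r)) := hsplitint
    _ ≤ (K+lam)/p^2 * 1 + lam*E/p^2 * (C₀ - 1/2) := by
        rw [hI1]
        have := mul_le_mul_of_nonneg_left hfr_bound hlamE
        linarith
    _ = m^2/p^2 := hfinal
    _ ≤ p ^ (-(2:ℤ)) * (m + p)^2 - 1 := hend
    _ = p ^ (-(2:ℤ)) * (Real.log C₀ + 2 * n + p)^2 - 1 := by rw [hgoalform]
end
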